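/- arXiv:2212.06738 — 14 statements merged into one kernel-verified Lean document; each statement's English description precedes it below -/
import Mathlib

section
/- Every commutative unital ring R admits an absolute integral closure: there exist a commutative ring S and an injective ring homomorphism R → S such that S is integral over R, the extension R ⊆ S is tight, and S is absolutely integrally closed. -/
universe u

noncomputable section

open Polynomial

namespace AICAux

variable (k : Type u) [CommRing k]

/-- The subtype of monic polynomials of positive degree. -/
abbrev MonicPos : Type u := { f : k[X] // f.Monic ∧ 0 < f.degree }

open MvPolynomial in
/-- Sends a monic polynomial `f` to `f(x_f)`. -/
def evalXSelf (f : MonicPos k) : MvPolynomial (MonicPos k) k :=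
  Polynomial.eval₂ MvPolynomial.C (X f) f.1

def spanEval : Ideal (MvPolynomial (MonicPos k) k) :=
  Ideal.span <| Set.range <| evalXSelf k

theorem adjoinRoot_of_injective {A : Type*} [CommRing A] {g : A[X]} (hg : g.Monic)
    (hdeg : 0 < g.degree) : Function.Injective (AdjoinRoot.of g) := by
  rcases subsingleton_or_nontrivial A with hA | hA
  · exact Function.injective_of_subsingleton _
  intro a b h
  have h2 := congrArg (AdjoinRoot.modByMonicHom hg) h
  have hC : ∀ c : A, AdjoinRoot.of g c = AdjoinRoot.mk g (Polynomial.C c) := fun _ => rfl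
  have e : ∀ c : A, (Polynomial.C c) %ₘ g = Polynomial.C c := fun c =>
    (Polynomial.modByMonic_eq_self_iff hg).mpr (lt_of_le_of_lt degree_C_le hdeg)
  rw [hC a, hC b, AdjoinRoot.modByMonicHom_mk, AdjoinRoot.modByMonicHom_mk, e a, e b] at h2
  exact Polynomial.C_injective h2

/-- For a finite set of monic polynomials of positive degree, there is an injective extension
in which all have roots. -/
theorem exists_finite_roots (s : Finset (MonicPos k)) :
    ∃ (T : Type u) (_ : CommRing T) (g : k →+* T),
      Function.Injective g ∧ ∀ f ∈ s, ∃ x : T, Polynomial.eval₂ g x f.1 = 0 := by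
  classical
  induction s using Finset.induction with
  | empty => exact ⟨k, inferInstance, RingHom.id k, Function.injective_id, by simp⟩
  | @insert a s ha ih =>
    obtain ⟨T, _, g, hg, hroots⟩ := ih
    rcases subsingleton_or_nontrivial T with hT | hT
    · have hk : Subsingleton k := Function.Injective.subsingleton hg
      refine ⟨T, inferInstance, g, Function.injective_of_subsingleton g, fun f _ => ⟨0, ?_⟩⟩
      exact Subsingleton.elim _ _
    have hmon : (a.1.map g).Monic := a.2.1.map g
    have hdeg : 0 < (a.1.map g).degree := by
      rw [a.2.1.degree_map g]
      exact a.2.2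
    refine ⟨AdjoinRoot (a.1.map g), inferInstance, (AdjoinRoot.of _).comp g,
      (adjoinRoot_of_injective hmon hdeg).comp hg, ?_⟩
    intro f hf
    rcases Finset.mem_insert.1 hf with rfl | hf
    · refine ⟨AdjoinRoot.root _, ?_⟩
      rw [← Polynomial.eval₂_map]
      exact AdjoinRoot.eval₂_root _
    · obtain ⟨x, hx⟩ := hroots f hf
      refine ⟨AdjoinRoot.of _ x, ?_⟩
      rw [← Polynomial.hom_eval₂, hx, map_zero]

theorem spanEval_comap {x : k} (hx : MvPolynomial.C x ∈ spanEval k) : x = 0 := by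
  classical
  rw [spanEval, Ideal.span, ← Set.image_univ,
    Finsupp.mem_span_image_iff_linearCombination] at hx
  obtain ⟨v, _, hv⟩ := hx
  obtain ⟨T, _, g, hg, hroots⟩ := exists_finite_roots k v.support
  choose root hroot using hroots
  let φ : MvPolynomial (MonicPos k) k →+* T :=
    (MvPolynomial.eval₂Hom g fun f => if h : f ∈ v.support then root f h else 0)
  have hφC : ∀ c : k, φ (MvPolynomial.C c) = g c := fun c => by
    simp [φ]
  have hφ : ∀ f ∈ v.support, φ (evalXSelf k f) = 0 := by
    intro f hf
    rw [evalXSelf, Polynomial.hom_eval₂]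
    have h1 : φ.comp MvPolynomial.C = g := by
      ext c; simp [φ]
    have h2 : φ (MvPolynomial.X f) = root f hf := by
      simp only [φ, MvPolynomial.eval₂Hom_X']
      rw [dif_pos hf]
    rw [h1, h2]
    exact hroot f hf
  replace hv := congrArg φ hv
  rw [Finsupp.linearCombination_apply, Finsupp.sum, map_sum, Finset.sum_eq_zero, hφC] at hv
  · exact hg (by rw [← hv, map_zero])
  · intro j hj
    rw [smul_eq_mul, map_mul, hφ _ hj, mul_zero]

/-- Adjoin a root of every monic polynomial of positive degree. -/
def AdjoinMonic : Type u :=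
  MvPolynomial (MonicPos k) k ⧸ spanEval k

instance AdjoinMonic.commRing : CommRing (AdjoinMonic k) :=
  Ideal.Quotient.commRing _

/-- Canonical map into `AdjoinMonic`. -/
def toAdjoinMonic : k →+* AdjoinMonic k :=
  (Ideal.Quotient.mk _).comp MvPolynomial.C

theorem toAdjoinMonic_injective : Function.Injective (toAdjoinMonic k) := by
  intro a b h
  have : MvPolynomial.C (a - b) ∈ spanEval k := by
    rw [map_sub]
    exact (Submodule.Quotient.eq _).1 h
  have := spanEval_comap k this
  exact sub_eq_zero.1 this

instance AdjoinMonic.algebra : Algebra k (AdjoinMonic k) :=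
  (toAdjoinMonic k).toAlgebra

theorem AdjoinMonic.algebraMap_eq : algebraMap k (AdjoinMonic k) = (Ideal.Quotient.mk _).comp
    (MvPolynomial.C : k →+* MvPolynomial (MonicPos k) k) := rfl

theorem AdjoinMonic.isIntegral (z : AdjoinMonic k) : IsIntegral k z := by
  let ⟨p, hp⟩ := Ideal.Quotient.mk_surjective z
  rw [← hp]
  induction p using MvPolynomial.induction_on generalizing z with
    | C => exact isIntegral_algebraMap
    | add _ _ ha hb => exact (ha _ rfl).add (hb _ rfl)
    | mul_X p f ih =>
      refine @IsIntegral.mul k _ _ _ _ _ (Ideal.Quotient.mk (spanEval k) _) (ih _ rfl) ?_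
      refine ⟨f.1, f.2.1, ?_⟩
      erw [AdjoinMonic.algebraMap_eq, ← Polynomial.hom_eval₂, Ideal.Quotient.eq_zero_iff_mem]
      exact Ideal.subset_span ⟨f, rfl⟩

theorem AdjoinMonic.exists_root {f : k[X]} (hfm : f.Monic) (hfd : 0 < f.degree) :
    ∃ x : AdjoinMonic k, f.eval₂ (toAdjoinMonic k) x = 0 :=
  ⟨Ideal.Quotient.mk _ <| MvPolynomial.X (⟨f, hfm, hfd⟩ : MonicPos k), by
    erw [toAdjoinMonic, ← Polynomial.hom_eval₂, Ideal.Quotient.eq_zero_iff_mem]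
    exact Ideal.subset_span ⟨_, rfl⟩⟩

/-- The `n`th step, together with its `CommRing` instance. -/
def stepAux (n : ℕ) : Σ α : Type u, CommRing α :=
  Nat.recOn n ⟨k, inferInstance⟩ fun _ ih => ⟨@AdjoinMonic ih.1 ih.2, @AdjoinMonic.commRing ih.1 ih.2⟩

/-- The `n`th step of the construction. -/
def Step (n : ℕ) : Type u :=
  (stepAux k n).1

theorem Step.zero : Step k 0 = k := rfl

instance Step.commRing (n : ℕ) : CommRing (Step k n) :=
  (stepAux k n).2

theorem Step.succ (n : ℕ) : Step k (n + 1) = AdjoinMonic (Step k n) := rfl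

/-- The canonical ring homomorphism to the next step. -/
def toStepSucc (n : ℕ) : Step k n →+* Step k (n + 1) :=
  @toAdjoinMonic (Step k n) (Step.commRing k n)

theorem toStepSucc_injective (n : ℕ) : Function.Injective (toStepSucc k n) :=
  toAdjoinMonic_injective (Step k n)

instance Step.algebraSucc (n) : Algebra (Step k n) (Step k (n + 1)) :=
  (toStepSucc k n).toAlgebra

theorem toStepSucc.exists_root {n} {f : Polynomial (Step k n)} (hfm : f.Monic)
    (hfd : 0 < f.degree) : ∃ x : Step k (n + 1), f.eval₂ (toStepSucc k n) x = 0 :=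
  @AdjoinMonic.exists_root _ (Step.commRing k n) _ hfm hfd

def toStepOfLE' (m n : ℕ) (h : m ≤ n) : Step k m → Step k n :=
  Nat.leRecOn h @fun a => toStepSucc k a

theorem toStepOfLE'.succ (m n : ℕ) (h : m ≤ n) :
    toStepOfLE' k m (Nat.succ n) (h.trans n.le_succ) =
    (toStepSucc k n) ∘ toStepOfLE' k m n h := by
  ext x
  exact Nat.leRecOn_succ h x

/-- The canonical ring homomorphism to a step with a greater index. -/
def toStepOfLE (m n : ℕ) (h : m ≤ n) : Step k m →+* Step k n where
  toFun := toStepOfLE' k m n h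
  map_one' := by
    induction' h with a h ih
    · exact Nat.leRecOn_self 1
    · simp [toStepOfLE'.succ k m a h, ih]
  map_mul' x y := by
    induction' h with a h ih
    · simp_rw [toStepOfLE', Nat.leRecOn_self]
    · simp [toStepOfLE'.succ k m a h, ih]
  map_zero' := by
    induction' h with a h ih
    · exact Nat.leRecOn_self 0
    · simp [toStepOfLE'.succ k m a h, ih]
  map_add' x y := by
    induction' h with a h ih
    · simp_rw [toStepOfLE', Nat.leRecOn_self]
    · simp [toStepOfLE'.succ k m a h, ih]

@[simp]
theorem coe_toStepOfLE (m n : ℕ) (h : m ≤ n) :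
    (toStepOfLE k m n h : Step k m → Step k n) = Nat.leRecOn h @fun n => toStepSucc k n :=
  rfl

instance Step.algebra (n) : Algebra k (Step k n) :=
  (toStepOfLE k 0 n n.zero_le).toAlgebra

instance Step.scalar_tower (n) : IsScalarTower k (Step k n) (Step k (n + 1)) :=
  IsScalarTower.of_algebraMap_eq fun z =>
    @Nat.leRecOn_succ (Step k) 0 n n.zero_le (n + 1).zero_le (@fun n => toStepSucc k n) z

theorem toStepOfLE.succ (n : ℕ) (h : 0 ≤ n) :
    toStepOfLE k 0 (n + 1) (h.trans n.le_succ) =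
    (toStepSucc k n).comp (toStepOfLE k 0 n h) := by
    ext1 x
    rw [RingHom.comp_apply]
    simp only [toStepOfLE, RingHom.coe_mk, MonoidHom.coe_mk, OneHom.coe_mk]
    change _ = (_ ∘ _) x
    rw [toStepOfLE'.succ k 0 n h]

theorem toStepOfLE_injective (m n : ℕ) (h : m ≤ n) :
    Function.Injective (toStepOfLE k m n h) := by
  induction h with
  | refl =>
    intro a b hab
    rwa [show ∀ c : Step k m, toStepOfLE k m m le_rfl c = c from
      fun c => Nat.leRecOn_self c, show ∀ c : Step k m, toStepOfLE k m m le_rfl c = c from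
      fun c => Nat.leRecOn_self c] at hab
  | @step p hp ih =>
    intro a b hab
    apply ih
    have h1 : (toStepOfLE k m (p + 1) (Nat.le_succ_of_le hp)) a =
        toStepSucc k p (toStepOfLE k m p hp a) := by
      change toStepOfLE' k m (p + 1) _ a = _
      rw [toStepOfLE'.succ k m p hp]; rfl
    have h2 : (toStepOfLE k m (p + 1) (Nat.le_succ_of_le hp)) b =
        toStepSucc k p (toStepOfLE k m p hp b) := by
      change toStepOfLE' k m (p + 1) _ b = _
      rw [toStepOfLE'.succ k m p hp]; rfl
    exact toStepSucc_injective k p (by rw [← h1, ← h2]; exact hab)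

theorem Step.isIntegral (n) : ∀ z : Step k n, IsIntegral k z := by
  induction' n with a h
  · intro z
    exact isIntegral_algebraMap
  · intro z
    change RingHom.IsIntegralElem _ _
    revert z
    change RingHom.IsIntegral _
    unfold algebraMap
    unfold algebra
    unfold RingHom.toAlgebra
    unfold RingHom.toAlgebra'
    simp only
    rw [toStepOfLE.succ k a a.zero_le]
    apply @RingHom.IsIntegral.trans (Step k 0) (Step k a) (Step k (a + 1)) _ _ _
        (toStepOfLE k 0 a (a.zero_le : 0 ≤ a)) (toStepSucc k a) _
    · intro z
      convert @AdjoinMonic.isIntegral (Step k a) (Step.commRing k a) (z : Step k (a + 1))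
      exact Iff.rfl
    · convert h
      exact Iff.rfl

instance toStepOfLE.directedSystem : DirectedSystem (Step k) fun i j h => toStepOfLE k i j h :=
  ⟨fun _ => Nat.leRecOn_self, fun _ _ _ h₁₂ h₂₃ x => (Nat.leRecOn_trans h₁₂ h₂₃ x).symm⟩

/-- The direct limit of the steps. -/
def Limit : Type u :=
  Ring.DirectLimit (Step k) fun i j h => toStepOfLE k i j h

instance Limit.commRing : CommRing (Limit k) :=
  Ring.instCommRingDirectLimit _ _

/-- The canonical ring embedding from the `n`th step to the limit. -/
def ofStep (n : ℕ) : Step k n →+* Limit k :=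
  Ring.DirectLimit.of _ _ _

/-- The canonical map from `k` into the limit. -/
def toLimit : k →+* Limit k :=
  ofStep k 0

theorem ofStep_succ (n : ℕ) : (ofStep k (n + 1)).comp (toStepSucc k n) = ofStep k n := by
  ext x
  have hx : toStepOfLE' k n (n + 1) n.le_succ x = toStepSucc k n x := Nat.leRecOn_succ' x
  unfold ofStep
  change Ring.DirectLimit.of (Step k) _ (n + 1) (toStepSucc k n x) = _
  dsimp [toStepOfLE]
  rw [← hx]
  change Ring.DirectLimit.of (Step k) (toStepOfLE' k) (n + 1) (_) =
      Ring.DirectLimit.of (Step k) (toStepOfLE' k) n x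
  convert Ring.DirectLimit.of_f n.le_succ x

theorem exists_ofStep (z : Limit k) : ∃ n x, ofStep k n x = z :=
  Ring.DirectLimit.exists_of z

theorem ofStep_comp (n : ℕ) :
    (ofStep k n).comp (toStepOfLE k 0 n n.zero_le) = toLimit k :=
  RingHom.ext fun x => Ring.DirectLimit.of_f n.zero_le x

theorem toLimit_injective : Function.Injective (toLimit k) :=
  Ring.DirectLimit.of_injective (fun i j h => toStepOfLE k i j h)
    (toStepOfLE_injective k) 0

theorem toLimit_isIntegral : (toLimit k).IsIntegral := by
  intro z
  obtain ⟨n, x, rfl⟩ := exists_ofStep k z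
  obtain ⟨p, hpm, hp⟩ := Step.isIntegral k n x
  refine ⟨p, hpm, ?_⟩
  have halg : algebraMap k (Step k n) = toStepOfLE k 0 n n.zero_le := rfl
  rw [halg] at hp
  erw [← ofStep_comp k n, ← Polynomial.hom_eval₂, hp, map_zero]

theorem limit_nontrivial [Nontrivial k] : Nontrivial (Limit k) :=
  nontrivial_of_ne (toLimit k 0) (toLimit k 1)
    fun h => zero_ne_one (toLimit_injective k h)

theorem limit_aiClosed [Nontrivial k] (q : Polynomial (Limit k)) (hq : q.Monic)
    (hdeg : 0 < q.degree) : ∃ x : Limit k, q.IsRoot x := by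
  haveI : Nontrivial (Limit k) := limit_nontrivial k
  have hex : ∃ n p₀, Polynomial.map (ofStep k n) p₀ = q := by
    exact Ring.DirectLimit.Polynomial.exists_of q
  obtain ⟨n, p₀, hp₀⟩ := hex
  obtain ⟨p, hmap, hdegeq, hpm⟩ :=
    Polynomial.lifts_and_degree_eq_and_monic ((Polynomial.mem_lifts _).2 ⟨p₀, hp₀⟩) hq
  have hpd : 0 < p.degree := hdegeq ▸ hdeg
  obtain ⟨x, hx⟩ := toStepSucc.exists_root k hpm hpd
  refine ⟨ofStep k (n + 1) x, ?_⟩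
  rw [Polynomial.IsRoot, ← hmap, ← ofStep_succ k n, Polynomial.eval_map,
    ← Polynomial.hom_eval₂, hx, RingHom.map_zero]

end AICAux

end



/-- A ring extension `f : R →+* S` is *tight* if every nonzero ideal of `S` contracts to a
nonzero ideal of `R`; equivalently, every nonzero `s : S` admits `t : S` and a nonzero `r : R`
with `s * t = f r`. -/
def Tight {R S : Type*} [CommRing R] [CommRing S] (f : R →+* S) : Prop :=
  ∀ s : S, s ≠ 0 → ∃ t : S, ∃ r : R, r ≠ 0 ∧ s * t = f r

/-- A commutative ring `S` is *absolutely integrally closed* if every monic polynomial of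
positive degree over `S` has a root in `S`. -/
def AIClosed (S : Type*) [CommRing S] : Prop :=
  ∀ p : Polynomial S, p.Monic → 0 < p.degree → ∃ x : S, p.IsRoot x

/-- `f : R →+* S` realizes `S` as an *absolute integral closure* of `R`: it is injective,
integral, tight, and `S` is absolutely integrally closed. -/
def IsAIC {R S : Type*} [CommRing R] [CommRing S] (f : R →+* S) : Prop :=
  Function.Injective f ∧ f.IsIntegral ∧ Tight f ∧ AIClosed S

/-- Every commutative unital ring admits an absolute integral closure. -/
theorem exists_absolute_integral_closure (R : Type u) [CommRing R] :
    ∃ (S : Type u) (_ : CommRing S) (f : R →+* S), IsAIC f := by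
  classical
  rcases subsingleton_or_nontrivial R with hR | hR
  · refine ⟨R, ‹_›, RingHom.id R, Function.injective_of_subsingleton _, ?_, ?_, ?_⟩
    · intro x
      exact ⟨Polynomial.X, Polynomial.monic_X, Subsingleton.elim _ _⟩
    · intro s hs
      exact absurd (Subsingleton.elim s 0) hs
    · intro p _ _
      exact ⟨0, Subsingleton.elim _ _⟩
  -- The limit ring: an injective integral extension in which every monic polynomial of
  -- positive degree has a root.
  let C := AICAux.Limit R
  let f : R →+* C := AICAux.toLimit R
  have hf_inj : Function.Injective f := AICAux.toLimit_injective R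
  have hf_int : f.IsIntegral := AICAux.toLimit_isIntegral R
  have hC_ai : AIClosed C := fun p hp hdeg => AICAux.limit_aiClosed R p hp hdeg
  haveI : Nontrivial C := AICAux.limit_nontrivial R
  -- Choose an ideal of `C` maximal among those contracting to `0` in `R`.
  obtain ⟨J, hJs, hJmax⟩ :=
    zorn_le₀ {J : Ideal C | ∀ r : R, f r ∈ J → r = 0} (by
      intro c hcs hchain
      rcases c.eq_empty_or_nonempty with rfl | hcne
      · refine ⟨⊥, ?_, by simp⟩
        intro r hr
        rw [Ideal.mem_bot] at hr
        exact hf_inj (by rw [hr, map_zero])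
      · refine ⟨sSup c, ?_, fun z hz => le_sSup hz⟩
        intro r hr
        obtain ⟨J, hJc, hrJ⟩ := (Submodule.mem_sSup_of_directed hcne hchain.directedOn).1 hr
        exact hcs hJc r hrJ)
  refine ⟨C ⧸ J, inferInstance, (Ideal.Quotient.mk J).comp f, ?_, ?_, ?_, ?_⟩
  · -- injective
    intro a b hab
    have : f a - f b ∈ J := Ideal.Quotient.eq.1 hab
    rw [← map_sub] at this
    have := hJs _ this
    exact sub_eq_zero.1 this
  · -- integral
    exact @RingHom.IsIntegral.trans R C (C ⧸ J) _ _ _ f (Ideal.Quotient.mk J) hf_int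
      (RingHom.isIntegral_of_surjective (Ideal.Quotient.mk J) Ideal.Quotient.mk_surjective)
  · -- tight
    intro s hs
    obtain ⟨c, rfl⟩ := Ideal.Quotient.mk_surjective s
    have hcJ : c ∉ J := fun hc => hs (Ideal.Quotient.eq_zero_iff_mem.2 hc)
    have hJ' : J ⊔ Ideal.span {c} ∉ {J : Ideal C | ∀ r : R, f r ∈ J → r = 0} := by
      intro hmem
      have hle : J ⊔ Ideal.span {c} ≤ J := hJmax hmem le_sup_left
      exact hcJ (hle (le_sup_right (α := Ideal C)
        (Ideal.subset_span (Set.mem_singleton c))))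
    simp only [Set.mem_setOf_eq, not_forall] at hJ'
    obtain ⟨r, hrJ', hr0⟩ := hJ'
    obtain ⟨y, hy, z, hz, hyz⟩ := Submodule.mem_sup.1 hrJ'
    obtain ⟨t, ht⟩ := Ideal.mem_span_singleton'.1 hz
    refine ⟨Ideal.Quotient.mk J t, r, hr0, ?_⟩
    have h1 : (Ideal.Quotient.mk J) (y + t * c) =
        (Ideal.Quotient.mk J) c * (Ideal.Quotient.mk J) t := by
      rw [map_add, Ideal.Quotient.eq_zero_iff_mem.2 hy, zero_add, map_mul, mul_comm]
    rw [RingHom.comp_apply, ← hyz, ← ht]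
    exact h1.symm
  · -- absolutely integrally closed
    intro q hq hdeg
    haveI : Nontrivial (C ⧸ J) := by
      refine nontrivial_of_ne ((Ideal.Quotient.mk J) (f 0)) ((Ideal.Quotient.mk J) (f 1)) ?_
      intro h
      have : f 1 - f 0 ∈ J := Ideal.Quotient.eq.1 h.symm
      rw [← map_sub] at this
      have h10 : (1 : R) - 0 = 0 := hJs _ this
      simp at h10
    have hlifts : q ∈ Polynomial.lifts (Ideal.Quotient.mk J) :=
      (Polynomial.lifts_iff_coeff_lifts q).2 fun n => Ideal.Quotient.mk_surjective _
    obtain ⟨p, hmap, hdegeq, hpm⟩ := Polynomial.lifts_and_degree_eq_and_monic hlifts hq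
    obtain ⟨x, hx⟩ := hC_ai p hpm (hdegeq ▸ hdeg)
    refine ⟨Ideal.Quotient.mk J x, ?_⟩
    rw [Polynomial.IsRoot, ← hmap, Polynomial.eval_map, Polynomial.eval₂_at_apply, hx, map_zero]
end

section
/- Let R be an integral domain and let S be the integral closure of R in an algebraic closure of its field of fractions Frac(R). Then S is an absolute integral closure of R: the inclusion R → S is injective and integral, the extension is tight, and S is absolutely integrally closed. -/
open Polynomial

/-- Auxiliary lemma for tightness: in a domain extension, an algebraic element `s ≠ 0`
can be multiplied into (the image of) `R`. -/
theorem tight_aux {R S : Type*} [CommRing R] [Nontrivial R] [CommRing S] [IsDomain S]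
    [Algebra R S] (s : S) (hs : s ≠ 0) :
    ∀ (n : ℕ) (p : R[X]), p.natDegree ≤ n → p ≠ 0 → Polynomial.aeval s p = 0 →
      ∃ t : S, ∃ r : R, r ≠ 0 ∧ s * t = algebraMap R S r := by
  intro n
  induction n with
  | zero =>
    intro p hdeg hp0 hev
    by_cases ha : p.coeff 0 = 0
    · exact absurd ((Polynomial.eq_C_of_natDegree_le_zero hdeg).trans (by rw [ha, map_zero])) hp0
    · obtain ⟨q, hq⟩ : (X : R[X]) ∣ (p - C (p.coeff 0)) := by
        rw [Polynomial.X_dvd_iff]; simp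
      refine ⟨-(Polynomial.aeval s q), p.coeff 0, ha, ?_⟩
      have : p = X * q + C (p.coeff 0) := by linear_combination hq
      have h2 := hev
      rw [this] at h2
      simp only [map_add, map_mul, Polynomial.aeval_X, Polynomial.aeval_C] at h2
      linear_combination -h2
  | succ n ih =>
    intro p hdeg hp0 hev
    by_cases ha : p.coeff 0 = 0
    · obtain ⟨q, hq⟩ : (X : R[X]) ∣ p := Polynomial.X_dvd_iff.mpr ha
      have hq0 : q ≠ 0 := by rintro rfl; simp at hq; exact hp0 hq
      have hqe : Polynomial.aeval s q = 0 := by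
        have : s * Polynomial.aeval s q = 0 := by
          rw [hq] at hev; simpa using hev
        exact (mul_eq_zero.mp this).resolve_left hs
      refine ih q ?_ hq0 hqe
      have : p.natDegree = q.natDegree + 1 := by
        rw [hq, Polynomial.natDegree_X_mul hq0]
      omega
    · obtain ⟨q, hq⟩ : (X : R[X]) ∣ (p - C (p.coeff 0)) := by
        rw [Polynomial.X_dvd_iff]; simp
      refine ⟨-(Polynomial.aeval s q), p.coeff 0, ha, ?_⟩
      have : p = X * q + C (p.coeff 0) := by linear_combination hq
      have h2 := hev
      rw [this] at h2
      simp only [map_add, map_mul, Polynomial.aeval_X, Polynomial.aeval_C] at h2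
      linear_combination -h2

set_option maxHeartbeats 2000000 in
/-- For a domain `R`, the integral closure of `R` in an algebraic closure of its fraction
field is an absolute integral closure of `R`. -/
theorem plus_isAIC (R : Type u) [CommRing R] [IsDomain R] :
    IsAIC (algebraMap R (integralClosure R (AlgebraicClosure (FractionRing R)))) := by
  classical
  set K := FractionRing R
  set L := AlgebraicClosure K
  set S := integralClosure R L
  have hinjL : Function.Injective (algebraMap R L) := by
    rw [IsScalarTower.algebraMap_eq R K L]
    exact (algebraMap K L).injective.comp (IsFractionRing.injective R K)
  have hinj : Function.Injective (algebraMap R S) := by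
    intro a b h
    apply hinjL
    have := congrArg (Subtype.val) h
    simpa using this
  have htight : Tight (algebraMap R S) := by
    intro s hs
    obtain ⟨p, hpm, hp⟩ := integralClosure.isIntegral (R := R) (A := L) s
    have hp0 : p ≠ 0 := hpm.ne_zero
    exact tight_aux s hs p.natDegree p le_rfl hp0 (by rw [Polynomial.aeval_def]; exact hp)
  have hai : AIClosed S := by
    intro p hmono hdeg
    set q : L[X] := p.map (algebraMap S L) with hq
    have hqdeg : 0 < q.degree := by
      rwa [hq, Polynomial.degree_map_eq_of_leadingCoeff_ne_zero]
      rw [hmono.leadingCoeff, map_one]; exact one_ne_zero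
    obtain ⟨x, hx⟩ := IsAlgClosed.exists_root q (by intro h; rw [h] at hqdeg; simp at hqdeg)
    have hxi : IsIntegral S x := ⟨p, hmono, by rwa [← Polynomial.eval_map]⟩
    have hxR : IsIntegral R x := isIntegral_trans x hxi
    refine ⟨⟨x, hxR⟩, ?_⟩
    have h0 : (algebraMap S L) (p.eval ⟨x, hxR⟩) = 0 := by
      rw [← Polynomial.eval₂_at_apply]
      have hcoe : (algebraMap S L) (⟨x, hxR⟩ : S) = x := rfl
      rw [hcoe, ← Polynomial.eval_map, ← hq]
      exact hx
    exact Subtype.ext (by simpa using h0)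
  exact ⟨hinj, fun s => integralClosure.isIntegral s, htight, hai⟩
end

section
/- Let R be an integral domain and let S be any absolute integral closure of R. Then S is isomorphic as an R-algebra to R⁺, the integral closure of R in an algebraic closure of Frac(R). In particular, any two absolute integral closures of an integral domain R are R-isomorphic. -/
open Polynomial in
/-- If `S` is absolutely integrally closed, then any root (in a domain `L`) of a monic
polynomial over `S` already lies in the image of `S`. -/
theorem AIClosed.root_mem_range {S L : Type*} [CommRing S] [CommRing L] [IsDomain L]
    (hS : AIClosed S) (φ : S →+* L) :
    ∀ (n : ℕ) (p : Polynomial S), p.natDegree = n → p.Monic → ∀ x : L,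
      Polynomial.eval₂ φ x p = 0 → x ∈ Set.range φ := by
  intro n
  induction n with
  | zero =>
    intro p hn hp x hx
    rw [hp.natDegree_eq_zero.mp hn] at hx
    simp at hx
  | succ n ih =>
    intro p hn hp x hx
    have hdeg : 0 < p.degree := natDegree_pos_iff_degree_pos.mp (by omega)
    haveI : Nontrivial S := by
      rcases subsingleton_or_nontrivial S with h | h
      · exact absurd (Subsingleton.elim p 0) (by intro hp0; simp [hp0] at hn)
      · exact h
    obtain ⟨s, hs⟩ := hS p hp hdeg
    obtain ⟨q, hq⟩ := (dvd_iff_isRoot (p := p) (a := s)).mpr hs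
    have hqm : q.Monic := (monic_X_sub_C s).of_mul_monic_left (hq ▸ hp)
    have hqd : q.natDegree = n := by
      have := hq ▸ hn
      rw [(monic_X_sub_C s).natDegree_mul hqm, natDegree_X_sub_C] at this
      omega
    rw [hq, eval₂_mul, eval₂_sub, eval₂_X, eval₂_C] at hx
    rcases mul_eq_zero.mp hx with h | h
    · exact ⟨s, by linear_combination -h⟩
    · exact ih q hqd hqm x h

open Polynomial in
/-- Any absolute integral closure of a domain `R` is `R`-isomorphic to `R⁺`, the integral
closure of `R` in an algebraic closure of `Frac(R)`. -/
theorem aic_of_domain_unique (R : Type u) [CommRing R] [IsDomain R]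
    (S : Type v) [CommRing S] (f : R →+* S) (hf : IsAIC f) :
    ∃ e : S ≃+* integralClosure R (AlgebraicClosure (FractionRing R)),
      e.toRingHom.comp f =
        algebraMap R (integralClosure R (AlgebraicClosure (FractionRing R))) := by
  obtain ⟨hinj, hint, htight, hai⟩ := hf
  haveI : Nontrivial S :=
    ⟨0, 1, fun h => one_ne_zero (α := R) (hinj (by simpa using h.symm))⟩
  haveI : NoZeroDivisors S := by
    constructor
    intro a b hab
    by_contra h
    push_neg at h
    obtain ⟨ha, hb⟩ := h
    obtain ⟨t, r, hr, ht⟩ := htight a ha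
    obtain ⟨t', r', hr', ht'⟩ := htight b hb
    have h0 : f (r * r') = 0 := by
      rw [map_mul, ← ht, ← ht',
        show a * t * (b * t') = a * b * (t * t') by ring, hab, zero_mul]
    exact mul_ne_zero hr hr' (hinj (h0.trans (map_zero f).symm))
  haveI : IsDomain S := NoZeroDivisors.to_isDomain S
  letI : Algebra R S := f.toAlgebra
  haveI : FaithfulSMul R (FractionRing S) :=
    (faithfulSMul_iff_algebraMap_injective R (FractionRing S)).mpr
      (show Function.Injective ((algebraMap S (FractionRing S)).comp (algebraMap R S)) from
        (IsFractionRing.injective S (FractionRing S)).comp hinj)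
  letI : Algebra (FractionRing R) (FractionRing S) := FractionRing.liftAlgebra R _
  haveI : IsScalarTower R (FractionRing R) (FractionRing S) :=
    FractionRing.isScalarTower_liftAlgebra R _
  haveI : Algebra.IsIntegral R S := ⟨hint⟩
  haveI : Algebra.IsAlgebraic R S := Algebra.IsIntegral.isAlgebraic
  haveI : Algebra.IsAlgebraic R (FractionRing S) :=
    (IsFractionRing.isAlgebraic_iff' R S (FractionRing S)).mp inferInstance
  haveI halgKL : Algebra.IsAlgebraic (FractionRing R) (FractionRing S) :=
    (IsFractionRing.comap_isAlgebraic_iff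
      (A := R) (K := FractionRing R) (C := FractionRing S)).mp inferInstance
  -- `Frac S` is algebraically closed.
  haveI : IsAlgClosed (FractionRing S) := by
    apply IsAlgClosed.of_exists_root
    intro p hpm hpirr
    set φ : S →+* FractionRing S := algebraMap S (FractionRing S) with hφ
    have hpd : 0 < p.natDegree := hpirr.natDegree_pos
    set q : Polynomial S := IsLocalization.integerNormalization (nonZeroDivisors S) p with hqdef
    obtain ⟨b, hbmem, hb⟩ := IsLocalization.integerNormalization_spec (nonZeroDivisors S) p
    have hbne : φ (b : S) ≠ 0 := by
      rw [map_ne_zero_iff _ (IsFractionRing.injective S (FractionRing S))]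
      exact nonZeroDivisors.ne_zero hbmem
    have hcoeff : ∀ i, φ (q.coeff i) = φ (b : S) * p.coeff i := by
      intro i; have := congrArg (coeff · i) hb; rw [coeff_map, coeff_smul, Algebra.smul_def] at this; exact this
    have hqn : q.natDegree = p.natDegree := by
      apply le_antisymm
      · apply natDegree_le_iff_coeff_eq_zero.mpr
        intro m hm
        have : φ (q.coeff m) = 0 := by
          rw [hcoeff m, coeff_eq_zero_of_natDegree_lt hm, mul_zero]
        exact (map_eq_zero_iff _ (IsFractionRing.injective S (FractionRing S))).mp this
      · apply le_natDegree_of_ne_zero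
        intro h
        apply hbne
        have := hcoeff p.natDegree
        rw [h, map_zero, hpm.coeff_natDegree, mul_one] at this
        exact this.symm
    have hq0 : q ≠ 0 := fun h => by
      apply hbne
      have := hcoeff p.natDegree
      rw [h, coeff_zero, map_zero, hpm.coeff_natDegree, mul_one] at this
      exact this.symm
    have hcne : φ q.leadingCoeff ≠ 0 := by
      rw [leadingCoeff, hqn, hcoeff, hpm.coeff_natDegree, mul_one]
      exact hbne
    have hmonic : (q.integralNormalization).Monic := monic_integralNormalization hq0
    have hmdeg : 0 < (q.integralNormalization).degree := by
      rw [degree_integralNormalization, ← natDegree_pos_iff_degree_pos, hqn]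
      exact hpd
    obtain ⟨z, hz⟩ := hai q.integralNormalization hmonic hmdeg
    set x : FractionRing S := φ z * (φ q.leadingCoeff)⁻¹ with hx
    have hcx : φ q.leadingCoeff * x = φ z := by
      rw [hx, ← mul_assoc, mul_comm (φ q.leadingCoeff) (φ z), mul_assoc,
        mul_inv_cancel₀ hcne, mul_one]
    have key := integralNormalization_eval₂_leadingCoeff_mul (p := q)
      (by omega : 1 ≤ q.natDegree) φ x
    rw [hcx, eval₂_hom, hz.eq_zero, map_zero] at key
    have hqx : q.eval₂ φ x = 0 := by
      rcases mul_eq_zero.mp key.symm with h | h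
      · exact absurd h (pow_ne_zero _ hcne)
      · exact h
    refine ⟨x, ?_⟩
    have hmapeval : (q.map φ).eval x = 0 := by rw [eval_map]; exact hqx
    have hmap : q.map φ = Polynomial.C (φ (b : S)) * p := by
      ext i
      rw [coeff_map, hcoeff i, coeff_C_mul]
    rw [hmap, eval_mul, eval_C] at hmapeval
    rcases mul_eq_zero.mp hmapeval with h | h
    · exact absurd h hbne
    · exact h
  haveI : IsAlgClosure (FractionRing R) (FractionRing S) := ⟨‹_›, halgKL⟩
  let e₀ : FractionRing S ≃ₐ[FractionRing R] AlgebraicClosure (FractionRing R) :=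
    IsAlgClosure.equiv (FractionRing R) _ _
  set A := AlgebraicClosure (FractionRing R) with hA
  set φ : S →+* FractionRing S := algebraMap S (FractionRing S) with hφ
  let ψ : S →+* A := (e₀ : FractionRing S →+* A).comp φ
  have hψf : ∀ r : R, ψ (f r) = algebraMap R A r := by
    intro r
    show e₀ (φ (f r)) = algebraMap R A r
    have h1 : φ (f r) = algebraMap R (FractionRing S) r := rfl
    rw [h1, IsScalarTower.algebraMap_apply R (FractionRing R) (FractionRing S) r,
      e₀.commutes, ← IsScalarTower.algebraMap_apply R (FractionRing R) A r]
  have hψcomp : ψ.comp f = algebraMap R A := RingHom.ext hψf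
  have hψint : ∀ s : S, IsIntegral R (ψ s) := by
    intro s
    obtain ⟨p, hpm, hp⟩ := hint s
    refine ⟨p, hpm, ?_⟩
    have := Polynomial.hom_eval₂ p f ψ s
    rw [hp, map_zero] at this
    rw [show algebraMap R A = ψ.comp f from hψcomp.symm]
    exact this.symm
  have hrange : ∀ x : A, IsIntegral R x → ∃ s : S, ψ s = x := by
    intro x hx
    obtain ⟨p, hpm, hp⟩ := hx
    have hsymm : ((e₀.symm : A →+* FractionRing S)).comp (algebraMap R A) =
        algebraMap R (FractionRing S) := by
      ext r
      show e₀.symm (algebraMap R A r) = algebraMap R (FractionRing S) r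
      rw [← hψf r]
      show e₀.symm (e₀ (φ (f r))) = _
      rw [e₀.symm_apply_apply]
      rfl
    have hy : Polynomial.eval₂ (algebraMap R (FractionRing S)) (e₀.symm x) p = 0 := by
      have := Polynomial.hom_eval₂ p (algebraMap R A) (e₀.symm : A →+* FractionRing S) x
      rw [hp, map_zero, hsymm] at this
      exact this.symm
    have hy2 : Polynomial.eval₂ φ (e₀.symm x) (p.map f) = 0 := by
      rw [eval₂_map]
      exact hy
    obtain ⟨s, hs⟩ := hai.root_mem_range φ (p.map f).natDegree (p.map f) rfl
      (hpm.map f) (e₀.symm x) hy2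
    refine ⟨s, ?_⟩
    show e₀ (φ s) = x
    rw [hs, e₀.apply_symm_apply]
  have hψinj : Function.Injective ψ :=
    e₀.injective.comp (IsFractionRing.injective S (FractionRing S))
  let ψ' : S →+* integralClosure R A :=
    ψ.codRestrict (integralClosure R A).toSubring hψint
  have hbij : Function.Bijective ψ' := by
    constructor
    · intro a b h
      exact hψinj (congrArg Subtype.val h)
    · rintro ⟨x, hx⟩
      obtain ⟨s, hs⟩ := hrange x hx
      exact ⟨s, Subtype.ext hs⟩
  refine ⟨RingEquiv.ofBijective ψ' hbij, ?_⟩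
  ext r
  show ψ (f r) = algebraMap R A r
  exact hψf r
end

section
/- Let R ⊆ T be commutative rings with T absolutely integrally closed. Then the integral closure of R in T is itself absolutely integrally closed. -/
/-- If `R ⊆ T` and `T` is absolutely integrally closed, then the integral closure of `R`
in `T` is absolutely integrally closed. -/
theorem aiClosed_integralClosure (R T : Type*) [CommRing R] [CommRing T] [Algebra R T]
    (hinj : Function.Injective (algebraMap R T)) (hT : AIClosed T) :
    AIClosed (integralClosure R T) := by
  intro p hp hdeg
  cases subsingleton_or_nontrivial T with
  | inl h => exact ⟨0, Subsingleton.elim _ _⟩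
  | inr h => ?_
  set f := algebraMap (integralClosure R T) T
  set q := p.map f with hq
  have hqm : q.Monic := hp.map f
  have hqdeg : 0 < q.degree := by
    rwa [hq, hp.degree_map f]
  obtain ⟨x, hx⟩ := hT q hqm hqdeg
  -- x is integral over the integral closure, hence over R
  have hxint : IsIntegral (integralClosure R T) x := ⟨p, hp, by rwa [Polynomial.IsRoot, Polynomial.eval_map] at hx⟩
  have hxR : IsIntegral R x := isIntegral_trans x hxint
  refine ⟨⟨x, hxR⟩, ?_⟩
  have hfinj : Function.Injective f := Subtype.val_injective
  apply hfinj
  rw [map_zero]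
  have : f (p.eval ⟨x, hxR⟩) = q.eval (f ⟨x, hxR⟩) := by
    rw [hq, Polynomial.eval_map, Polynomial.eval₂_hom]
  simpa [this, show f ⟨x, hxR⟩ = x from rfl] using hx
end

section
/- Let A be a finite index set, and for each a ∈ A let R_a be an integral domain and S_a an absolute integral closure of R_a. Then the product ring ∏_{a∈A} S_a, equipped with the product of the structure maps, is an absolute integral closure of ∏_{a∈A} R_a. -/
/-- A finite product of absolute integral closures of domains is an absolute integral
closure of the product of the domains. -/
theorem isAIC_pi_of_finite (A : Type u) [Finite A]
    (R : A → Type v) [∀ a, CommRing (R a)] [∀ a, IsDomain (R a)]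
    (S : A → Type w) [∀ a, CommRing (S a)]
    (f : ∀ a, R a →+* S a) (hf : ∀ a, IsAIC (f a)) :
    IsAIC (Pi.ringHom fun a => (f a).comp (Pi.evalRingHom R a)) := by
  classical
  haveI := Fintype.ofFinite A
  set F := Pi.ringHom fun a => (f a).comp (Pi.evalRingHom R a) with hF
  have hFapp : ∀ (r : ∀ a, R a) (a : A), F r a = f a (r a) := fun r a => rfl
  haveI : ∀ a, Nontrivial (S a) := fun a =>
    nontrivial_of_ne (f a 1) (f a 0) (fun h => one_ne_zero ((hf a).1 h))
  refine ⟨?_, ?_, ?_, ?_⟩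
  · -- injective
    intro r r' h
    funext a
    exact (hf a).1 (congrFun h a)
  · -- integral
    intro x
    obtain h | h := isEmpty_or_nonempty A
    · refine ⟨Polynomial.X, Polynomial.monic_X, ?_⟩
      simp only [Polynomial.eval₂_X]
      funext a
      exact h.elim a
    · obtain ⟨a0⟩ := h
      haveI : Nontrivial (∀ a, R a) := ⟨⟨0, 1, fun e => zero_ne_one (congrFun e a0)⟩⟩
      choose p hpm hpz using fun a => (hf a).2.1 (x a)
      set N := Finset.univ.sup fun a => (p a).natDegree with hN
      have hle : ∀ a, (p a).natDegree ≤ N := fun a => Finset.le_sup (f := fun a => (p a).natDegree) (Finset.mem_univ a)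
      set q := fun a => p a * Polynomial.X ^ (N - (p a).natDegree) with hq
      have hqm : ∀ a, (q a).Monic := fun a => (hpm a).mul (Polynomial.monic_X_pow _)
      have hqdeg : ∀ a, (q a).natDegree = N := by
        intro a
        rw [hq]
        rw [(hpm a).natDegree_mul (Polynomial.monic_X_pow _), Polynomial.natDegree_X_pow]
        have := hle a
        omega
      have hqz : ∀ a, Polynomial.eval₂ (f a) (x a) (q a) = 0 := by
        intro a
        rw [hq, Polynomial.eval₂_mul, hpz a, zero_mul]
      set Q : Polynomial (∀ a, R a) :=
        ∑ i ∈ Finset.range (N + 1),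
          Polynomial.C (fun a => (q a).coeff i) * Polynomial.X ^ i with hQ
      have hQcoeff : ∀ j, j ≤ N → Q.coeff j = fun a => (q a).coeff j := by
        intro j hj
        rw [hQ, Polynomial.finset_sum_coeff]
        rw [Finset.sum_eq_single j]
        · simp
        · intro i _ hij
          simp [Polynomial.coeff_C_mul, Polynomial.coeff_X_pow, Ne.symm hij]
        · intro hj'
          exact absurd (Finset.mem_range.mpr (by omega)) hj'
      have hQdeg : Q.natDegree ≤ N := by
        refine (Polynomial.natDegree_sum_le _ _).trans ?_
        rw [Finset.fold_max_le]
        refine ⟨Nat.zero_le _, fun i hi => ?_⟩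
        simp only [Function.comp]
        refine (Polynomial.natDegree_mul_le).trans ?_
        simp only [Polynomial.natDegree_C, Polynomial.natDegree_X_pow, zero_add]
        simp only [Finset.mem_range] at hi
        omega
      have hQmonic : Q.Monic := by
        refine Polynomial.monic_of_natDegree_le_of_coeff_eq_one N hQdeg ?_
        rw [hQcoeff N le_rfl]
        funext a
        have := (hqm a).coeff_natDegree
        rw [hqdeg a] at this
        exact this
      refine ⟨Q, hQmonic, ?_⟩
      funext a
      have : Polynomial.eval₂ F x Q =
          ∑ i ∈ Finset.range (N + 1), F (fun a => (q a).coeff i) * x ^ i := by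
        rw [hQ, Polynomial.eval₂_finset_sum]
        simp [Polynomial.eval₂_mul, Polynomial.eval₂_C, Polynomial.eval₂_X_pow]
      rw [this]
      have : (∑ i ∈ Finset.range (N + 1), F (fun a => (q a).coeff i) * x ^ i) a =
          ∑ i ∈ Finset.range (N + 1), f a ((q a).coeff i) * (x a) ^ i := by
        simp [Finset.sum_apply, hFapp, Pi.mul_apply, Pi.pow_apply]
      rw [this, ← Polynomial.eval₂_eq_sum_range' (f a) (by rw [hqdeg a]; omega : (q a).natDegree < N + 1),
        hqz a]
      rfl
  · -- tight
    intro s hs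
    have : ∃ a, s a ≠ 0 := by
      by_contra h
      push_neg at h
      exact hs (funext h)
    obtain ⟨a, ha⟩ := this
    obtain ⟨t₀, r₀, hr₀, hst⟩ := (hf a).2.2.1 (s a) ha
    refine ⟨Pi.single a t₀, Pi.single a r₀, ?_, ?_⟩
    · intro h
      apply hr₀
      have := congrFun h a
      rwa [Pi.single_eq_same] at this
    · funext b
      rcases eq_or_ne b a with rfl | hb
      · simpa [Pi.single_eq_same, hFapp] using hst
      · simp [Pi.single_eq_of_ne hb, hFapp]
  · -- AIClosed
    intro P hP hdeg
    have root : ∀ a, ∃ x : S a, (P.map (Pi.evalRingHom S a)).IsRoot x := by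
      intro a
      refine (hf a).2.2.2 _ (hP.map _) ?_
      rwa [hP.degree_map]
    choose x hx using root
    refine ⟨x, ?_⟩
    funext a
    have : (Pi.evalRingHom S a) (P.eval x) = (P.map (Pi.evalRingHom S a)).eval (x a) := by
      rw [Polynomial.eval_map]
      exact (Polynomial.eval₂_at_apply (Pi.evalRingHom S a) x).symm
    have h2 := hx a
    rw [Polynomial.IsRoot] at h2
    have := this.trans h2
    exact this
end

section
/- Let A be a finite index set, let R_a be integral domains for a ∈ A, and let P = ∏_{a∈A} R_a. Then every absolute integral closure of P is P-isomorphic (as a P-algebra) to ∏_{a∈A} R_a⁺; in particular, P has a unique absolute integral closure up to P-isomorphism. -/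
open Polynomial

theorem AIClosed.of_surjective {T T' : Type*} [CommRing T] [CommRing T'] (hT : AIClosed T)
    (π : T →+* T') (hπ : Function.Surjective π) : AIClosed T' := by
  intro p hp hdeg
  have hp0 : p ≠ 0 := fun h => by simp [h] at hdeg
  haveI : Nontrivial T' := ⟨p.leadingCoeff, 0, leadingCoeff_ne_zero.2 hp0⟩
  have h1 : p ∈ Polynomial.lifts π := by
    rw [Polynomial.lifts_iff_coeff_lifts]
    exact fun n => hπ _
  obtain ⟨q, hq, hdeg', hq'⟩ := Polynomial.lifts_and_degree_eq_and_monic h1 hp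
  obtain ⟨x, hx⟩ := hT q hq' (by rw [hdeg']; exact hdeg)
  refine ⟨π x, ?_⟩
  rw [IsRoot, ← hq, eval_map, eval₂_at_apply, hx, map_zero]

theorem AIClosed.exists_preimage {T L : Type*} [CommRing T] [CommRing L] [IsDomain L]
    (hT : AIClosed T) (ι : T →+* L) {p : Polynomial T} (hp : p.Monic) {x : L}
    (hx : p.eval₂ ι x = 0) : ∃ t : T, ι t = x := by
  obtain ⟨n, hn⟩ : ∃ n, p.natDegree = n := ⟨_, rfl⟩
  induction n using Nat.strong_induction_on generalizing p with
  | _ n ih =>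
    rcases Nat.eq_zero_or_pos n with h0 | hpos
    · subst h0
      rw [hp.natDegree_eq_zero.mp hn] at hx
      simp at hx
    · have hdeg : 0 < p.degree :=
        Polynomial.natDegree_pos_iff_degree_pos.mp (hn ▸ hpos)
      haveI : Nontrivial T := by
        rcases subsingleton_or_nontrivial T with hs | hnt
        · exact absurd (Subsingleton.elim p 0) fun h => by simp [h] at hdeg
        · exact hnt
      obtain ⟨c, hc⟩ := hT p hp hdeg
      obtain ⟨q, hq⟩ := Polynomial.dvd_iff_isRoot.mpr hc
      have hqm : q.Monic := (monic_X_sub_C c).of_mul_monic_left (hq ▸ hp)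
      have hq0 : eval₂ ι x (X - C c) * eval₂ ι x q = 0 := by
        rw [← eval₂_mul, ← hq]; exact hx
      rcases mul_eq_zero.mp hq0 with h | h
      · refine ⟨c, ?_⟩
        have h' : x - ι c = 0 := by simpa using h
        exact (sub_eq_zero.mp h').symm
      · have hdq : q.natDegree < n := by
          have h1 : p.natDegree = 1 + q.natDegree := by
            rw [hq, (monic_X_sub_C c).natDegree_mul hqm, natDegree_X_sub_C]
          omega
        exact ih _ hdq hqm h rfl

theorem exists_equiv_of_isAIC_of_domain {R : Type*} {T : Type*} [CommRing R] [IsDomain R]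
    [CommRing T] (g : R →+* T) (hg : IsAIC g) :
    ∃ e : T ≃+* integralClosure R (AlgebraicClosure (FractionRing R)),
      RingHom.comp (e : T →+* integralClosure R (AlgebraicClosure (FractionRing R))) g =
        algebraMap R (integralClosure R (AlgebraicClosure (FractionRing R))) := by
  obtain ⟨hinj, hint, htight, hai⟩ := hg
  haveI : Nontrivial T :=
    ⟨1, 0, fun h => one_ne_zero (hinj (by rw [map_one, map_zero, h]))⟩
  haveI : NoZeroDivisors T := by
    constructor
    intro x y hxy
    by_contra hcon
    push_neg at hcon
    obtain ⟨hx, hy⟩ := hcon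
    obtain ⟨x', r, hr, hxr⟩ := htight x hx
    obtain ⟨y', r', hr', hyr⟩ := htight y hy
    have : g (r * r') = 0 := by
      rw [map_mul, ← hxr, ← hyr]
      calc x * x' * (y * y') = x * y * (x' * y') := by ring
      _ = 0 := by rw [hxy, zero_mul]
    have : r * r' = 0 := hinj (by rw [this, map_zero])
    exact mul_ne_zero hr hr' this
  haveI : IsDomain T := NoZeroDivisors.to_isDomain T
  letI : Algebra R T := g.toAlgebra
  have halgmap : algebraMap R (FractionRing T) = (algebraMap T (FractionRing T)).comp g := by
    rw [IsScalarTower.algebraMap_eq R T (FractionRing T)]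
    rfl
  haveI : FaithfulSMul R (FractionRing T) :=
    (faithfulSMul_iff_algebraMap_injective R _).mpr
      (by rw [halgmap]; exact (IsFractionRing.injective T (FractionRing T)).comp hinj)
  letI : Algebra (FractionRing R) (FractionRing T) := FractionRing.liftAlgebra R _
  haveI : IsScalarTower R (FractionRing R) (FractionRing T) :=
    FractionRing.isScalarTower_liftAlgebra R _
  haveI halgRT : Algebra.IsAlgebraic R T := ⟨fun t => by
    obtain ⟨p, hpm, hp⟩ := hint t
    exact ⟨p, hpm.ne_zero, by rwa [aeval_def]⟩⟩
  haveI : Algebra.IsAlgebraic R (FractionRing T) :=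
    (IsFractionRing.isAlgebraic_iff' R T (FractionRing T)).mp halgRT
  haveI : Algebra.IsAlgebraic (FractionRing R) (FractionRing T) :=
    IsFractionRing.comap_isAlgebraic_iff.mp ‹_›
  haveI : IsAlgClosed (FractionRing T) := by
    apply IsAlgClosed.of_exists_root
    intro p hpm hirr
    set K := FractionRing T
    set ι := algebraMap T K with hι
    have hp0 : p ≠ 0 := hpm.ne_zero
    set q := IsLocalization.integerNormalization (nonZeroDivisors T) p with hqdef
    have hq0 : q ≠ 0 := fun h => hp0 (IsFractionRing.integerNormalization_eq_zero_iff.mp h)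
    obtain ⟨b, hb⟩ := IsLocalization.integerNormalization_map_to_map (nonZeroDivisors T) p
    have hbne : ι (b : T) ≠ 0 := fun h =>
      mem_nonZeroDivisors_iff_ne_zero.mp b.2 ((IsFractionRing.injective T K) (by rwa [map_zero]))
    have hndeg : 1 ≤ q.natDegree := by
      have h1 : p.natDegree ≤ ((b : T) • p).natDegree := by
        apply le_natDegree_of_ne_zero
        rw [coeff_smul, hpm.coeff_natDegree, Algebra.smul_def, mul_one]
        exact hbne
      have h2 : ((b : T) • p).natDegree ≤ q.natDegree := hb ▸ natDegree_map_le
      have h3 : 0 < p.natDegree := hirr.natDegree_pos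
      omega
    have hm : (integralNormalization q).Monic := monic_integralNormalization hq0
    obtain ⟨c, hc⟩ := hai _ hm (by
      rw [degree_integralNormalization]
      exact natDegree_pos_iff_degree_pos.mp hndeg)
    have hlc : ι q.leadingCoeff ≠ 0 := fun h =>
      leadingCoeff_ne_zero.mpr hq0 ((IsFractionRing.injective T K) (by rwa [map_zero]))
    set x := ι c / ι q.leadingCoeff with hx
    refine ⟨x, ?_⟩
    have key := integralNormalization_eval₂_leadingCoeff_mul hndeg ι x
    have hmul : ι q.leadingCoeff * x = ι c := by
      rw [hx, mul_comm]; exact div_mul_cancel₀ _ hlc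
    rw [hmul, eval₂_at_apply, hc, map_zero] at key
    have h2 : eval₂ ι x q = 0 := by
      rcases mul_eq_zero.mp key.symm with h | h
      · exact absurd h (pow_ne_zero _ hlc)
      · exact h
    have h3 : ι (b : T) * p.eval x = 0 := by
      rw [← Algebra.smul_def, ← eval_smul, ← hb, eval_map]
      exact h2
    exact (mul_eq_zero.mp h3).resolve_left hbne
  haveI : IsAlgClosure (FractionRing R) (FractionRing T) := ⟨‹_›, ‹_›⟩
  set K := FractionRing T
  set Ω := AlgebraicClosure (FractionRing R) with hΩ
  let φ : K ≃ₐ[FractionRing R] Ω := IsAlgClosure.equiv (FractionRing R) K Ω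
  have hφ : ∀ r : R, φ (algebraMap R K r) = algebraMap R Ω r := fun r => by
    rw [IsScalarTower.algebraMap_apply R (FractionRing R) K,
      IsScalarTower.algebraMap_apply R (FractionRing R) Ω, AlgEquiv.commutes]
  let χ : T →+* Ω := (φ : K →+* Ω).comp (algebraMap T K)
  have hχinj : Function.Injective χ :=
    φ.injective.comp (IsFractionRing.injective T K)
  have hχg : ∀ r : R, χ (g r) = algebraMap R Ω r := fun r => by
    have : (algebraMap T K) (g r) = algebraMap R K r := by rw [halgmap]; rfl
    show φ ((algebraMap T K) (g r)) = _
    rw [this, hφ]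
  have hχgc : (algebraMap R Ω) = χ.comp g := RingHom.ext fun r => (hχg r).symm
  have hmem : ∀ t : T, χ t ∈ integralClosure R Ω := fun t => by
    obtain ⟨p, hpm, hp⟩ := hint t
    refine ⟨p, hpm, ?_⟩
    rw [hχgc, ← hom_eval₂ p g χ t, hp, map_zero]
  let ψ : T →+* integralClosure R Ω := χ.codRestrict (integralClosure R Ω).toSubring hmem
  have hψinj : Function.Injective ψ := fun a b h => hχinj (congrArg Subtype.val h)
  have hψsurj : Function.Surjective ψ := by
    rintro ⟨y, hy⟩
    obtain ⟨p, hpm, hpy⟩ := hy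
    have hξinj : Function.Injective ⇑(φ : K →+* Ω) := fun a b h => φ.injective h
    have hev : eval₂ (algebraMap T K) (φ.symm y) (p.map g) = 0 := by
      rw [eval₂_map]
      apply hξinj
      have h1 := hom_eval₂ p ((algebraMap T K).comp g) (φ : K →+* Ω) (φ.symm y)
      have h2 : ((φ : K →+* Ω)).comp ((algebraMap T K).comp g) = algebraMap R Ω := by
        rw [← RingHom.comp_assoc]
        exact hχgc.symm
      have h4 : (φ : K →+* Ω) (φ.symm y) = y := φ.apply_symm_apply y
      rw [map_zero, h1, h2, h4]
      exact hpy
    obtain ⟨t, ht⟩ := hai.exists_preimage (algebraMap T K) (hpm.map g) hev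
    refine ⟨t, Subtype.ext ?_⟩
    show χ t = y
    show φ ((algebraMap T K) t) = y
    rw [ht, AlgEquiv.apply_symm_apply]
  refine ⟨RingEquiv.ofBijective ψ ⟨hψinj, hψsurj⟩, RingHom.ext fun r => Subtype.ext ?_⟩
  show χ (g r) = _
  rw [hχg]
  rfl

set_option maxHeartbeats 2000000 in
/-- Every absolute integral closure of a finite product `P = ∏ R_a` of domains is
`P`-isomorphic to `∏ R_a⁺`; so `P` has a unique aic up to `P`-isomorphism. -/
theorem aic_of_finite_product_of_domains_unique (A : Type u) [Finite A]
    (R : A → Type v) [∀ a, CommRing (R a)] [∀ a, IsDomain (R a)]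
    (S : Type w) [CommRing S] (f : (∀ a, R a) →+* S) (hf : IsAIC f) :
    ∃ e : S ≃+* ∀ a, integralClosure (R a) (AlgebraicClosure (FractionRing (R a))),
      e.toRingHom.comp f =
        Pi.ringHom fun a =>
          (algebraMap (R a)
            (integralClosure (R a) (AlgebraicClosure (FractionRing (R a))))).comp
            (Pi.evalRingHom R a) := by
  classical
  cases nonempty_fintype A
  obtain ⟨hinj, hint, htight, hai⟩ := hf
  set ε : A → S := fun a => f (Pi.single a 1) with hε
  set I : A → Ideal S := fun a => Ideal.span {1 - ε a} with hI
  have hidem : ∀ a, ε a * ε a = ε a := fun a => by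
    rw [hε, ← map_mul, ← Pi.single_mul, one_mul]
  have hsum : ∑ a, ε a = 1 := by
    rw [hε, ← map_sum, ← map_one f]
    congr 1
    have := Finset.univ_sum_single (1 : ∀ a, R a)
    simpa using this
  have hmemI : ∀ a (s : S), s ∈ I a ↔ s * ε a = 0 := fun a s => by
    constructor
    · intro hs
      obtain ⟨y, hy⟩ := Ideal.mem_span_singleton'.mp hs
      rw [← hy, mul_assoc, sub_mul, one_mul, hidem, sub_self, mul_zero]
    · intro hs
      apply Ideal.mem_span_singleton'.mpr
      exact ⟨s, by rw [mul_sub, mul_one, hs, sub_zero]⟩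
  -- the component ring homs
  have single_mul : ∀ a (x y : R a), Pi.single a (x * y) = Pi.single a x * Pi.single a y :=
    fun a x y => Pi.single_mul a x y  -- name check
  let g : ∀ a, R a →+* S ⧸ I a := fun a =>
    { toFun := fun r => Ideal.Quotient.mk (I a) (f (Pi.single a r))
      map_one' := by
        rw [← map_one (Ideal.Quotient.mk (I a))]
        apply Ideal.Quotient.eq.mpr
        show ε a - 1 ∈ I a
        have h : ε a - 1 = -(1 - ε a) := by ring
        rw [h]
        exact neg_mem (Ideal.subset_span rfl)
      map_mul' := fun x y => by
        rw [← map_mul, ← map_mul, ← Pi.single_mul]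
      map_zero' := by show Ideal.Quotient.mk (I a) (f (Pi.single a 0)) = 0; rw [Pi.single_zero, map_zero, map_zero]
      map_add' := fun x y => by rw [← map_add, ← map_add, ← Pi.single_add] }
  have hg_apply : ∀ a (r : R a), g a r = Ideal.Quotient.mk (I a) (f (Pi.single a r)) :=
    fun _ _ => rfl
  -- key : mk (f p) = g a (p a)
  have hkey : ∀ a (p : ∀ b, R b), Ideal.Quotient.mk (I a) (f p) = g a (p a) := by
    intro a p
    rw [hg_apply]
    apply Ideal.Quotient.eq.mpr
    have h1 : p - Pi.single a (p a) = p * (1 - Pi.single a 1) := by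
      funext b
      by_cases hb : b = a
      · subst hb; simp
      · simp [Pi.single_eq_of_ne hb]
    rw [← map_sub, h1, map_mul]
    apply Ideal.mem_span_singleton'.mpr
    exact ⟨f p, by rw [map_sub, map_one]⟩
  have habs : ∀ a (r : R a), f (Pi.single a r) * ε a = f (Pi.single a r) := fun a r => by
    rw [hε, ← map_mul, ← Pi.single_mul, mul_one]
  have hIsAIC : ∀ a, IsAIC (g a) := by
    intro a
    refine ⟨?_, ?_, ?_, ?_⟩
    · -- injective
      intro r r' h
      have h1 : f (Pi.single a r) - f (Pi.single a r') ∈ I a := Ideal.Quotient.eq.mp h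
      have h2 : (f (Pi.single a r) - f (Pi.single a r')) * ε a = 0 := (hmemI a _).mp h1
      rw [sub_mul, habs, habs, sub_eq_zero] at h2
      have h3 := hinj h2
      have h4 := congrFun h3 a
      simpa using h4
    · -- integral
      intro x
      obtain ⟨s, rfl⟩ := Ideal.Quotient.mk_surjective x
      obtain ⟨q, hqm, hq⟩ := hint s
      refine ⟨q.map (Pi.evalRingHom R a), hqm.map _, ?_⟩
      have hcomp : (g a).comp (Pi.evalRingHom R a) = (Ideal.Quotient.mk (I a)).comp f :=
        RingHom.ext fun p => (hkey a p).symm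
      rw [eval₂_map, hcomp, ← hom_eval₂, hq, map_zero]
    · -- tight
      intro x hx
      obtain ⟨s, rfl⟩ := Ideal.Quotient.mk_surjective x
      have hsε : s * ε a ≠ 0 := fun h =>
        hx (Ideal.Quotient.eq_zero_iff_mem.mpr ((hmemI a s).mpr h))
      obtain ⟨t, r, hr, hst⟩ := htight (s * ε a) hsε
      have h1 : f r * ε a = f r := by
        rw [← hst]
        have : s * ε a * t * ε a = s * (ε a * ε a) * t := by ring
        rw [this, hidem]
      have h2 : r * Pi.single a 1 = Pi.single a (r a) := by
        funext b
        by_cases hb : b = a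
        · subst hb; simp
        · simp [Pi.single_eq_of_ne hb]
      have h3 : Pi.single a (r a) = r := by
        rw [← h2]
        apply hinj
        rw [map_mul]
        exact h1
      have hra : r a ≠ 0 := fun h => hr (by rw [← h3, h, Pi.single_zero])
      refine ⟨Ideal.Quotient.mk (I a) t, r a, hra, ?_⟩
      rw [← map_mul, hg_apply, h3]
      apply Ideal.Quotient.eq.mpr
      apply (hmemI a _).mpr
      rw [← hst]
      have : (s * t - s * ε a * t) * ε a = s * t * ε a - s * (ε a * ε a) * t := by ring
      rw [this, hidem]
      ring
    · -- ai closed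
      exact hai.of_surjective _ Ideal.Quotient.mk_surjective
  let m : S →+* ∀ a, S ⧸ I a := Pi.ringHom fun a => Ideal.Quotient.mk (I a)
  have minj : Function.Injective m := by
    rw [injective_iff_map_eq_zero]
    intro x hxm
    have hxa : ∀ a, x * ε a = 0 := fun a =>
      (hmemI a x).mp (Ideal.Quotient.eq_zero_iff_mem.mp (congrFun hxm a))
    calc x = x * ∑ a, ε a := by rw [hsum, mul_one]
    _ = ∑ a, x * ε a := Finset.mul_sum _ _ _
    _ = 0 := Finset.sum_eq_zero fun a _ => hxa a
  have msurj : Function.Surjective m := by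
    intro x
    choose s hs using fun a => Ideal.Quotient.mk_surjective (x a)
    refine ⟨∑ b, s b * ε b, ?_⟩
    funext a
    show Ideal.Quotient.mk (I a) (∑ b, s b * ε b) = x a
    rw [map_sum, Finset.sum_eq_single a]
    · have hd : s a * ε a - s a ∈ I a := by
        apply (hmemI a _).mpr
        have : (s a * ε a - s a) * ε a = s a * (ε a * ε a) - s a * ε a := by ring
        rw [this, hidem, sub_self]
      rw [Ideal.Quotient.eq.mpr hd, hs]
    · intro b _ hb
      apply Ideal.Quotient.eq_zero_iff_mem.mpr
      apply (hmemI a _).mpr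
      have hεb : ε b * ε a = 0 := by
        rw [hε, ← map_mul, ← map_zero f]
        congr 1
        funext c
        rw [Pi.mul_apply, Pi.zero_apply]
        by_cases hc : c = a
        · subst hc
          rw [Pi.single_eq_of_ne (Ne.symm hb), zero_mul]
        · rw [Pi.single_eq_of_ne hc, mul_zero]
      rw [mul_assoc, hεb, mul_zero]
    · intro h
      exact absurd (Finset.mem_univ a) h
  choose ea hea using fun a => exists_equiv_of_isAIC_of_domain (g a) (hIsAIC a)
  have h1 : Function.Bijective m := ⟨minj, msurj⟩
  let E1 : S ≃+* ∀ a, S ⧸ I a := RingEquiv.ofBijective m h1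
  let E2 := RingEquiv.piCongrRight ea
  refine ⟨E1.trans E2, ?_⟩
  apply RingHom.ext
  intro p
  funext a
  have h2 : (E1.trans E2) (f p) a = ea a (Ideal.Quotient.mk (I a) (f p)) := rfl
  have h3 : (E1.trans E2).toRingHom.comp f p = (E1.trans E2) (f p) := rfl
  rw [h3, h2, hkey a p]
  exact RingHom.congr_fun (hea a) (p a)
end

section
/- Let A be an arbitrary index set, let R_a be integral domains for a ∈ A, let P = ∏_{a∈A} R_a, and let R be a subring of P such that P is integral over R and the extension R ⊆ P is tight. Let T be the integral closure of R in ∏_{a∈A} R_a⁺. Then T is an absolute integral closure of R, and it is universal: for every absolute integral closure S of R there exists an injective R-algebra homomorphism from S into T. -/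
set_option synthInstance.maxHeartbeats 1000000
set_option maxHeartbeats 1000000

/-- The integral closure of `R` in `B` along a ring homomorphism `g : R →+* B`,
as a subring of `B`. -/
noncomputable def intClosure {R B : Type*} [CommRing R] [CommRing B] (g : R →+* B) :
    Subring B :=
  letI := g.toAlgebra
  (integralClosure R B).toSubring

/-- The corestriction of `g : R →+* B` to the integral closure of `R` in `B`. -/
noncomputable def intClosureMap {R B : Type*} [CommRing R] [CommRing B] (g : R →+* B) :
    R →+* intClosure g :=
  g.codRestrict (intClosure g) fun x => by
    letI := g.toAlgebra
    exact (integralClosure R B).algebraMap_mem x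

/-- The componentwise map from a product of domains into the product of their `R⁺`'s. -/
noncomputable def piPlusMap (A : Type u) (R : A → Type v)
    [∀ a, CommRing (R a)] [∀ a, IsDomain (R a)] :
    (∀ a, R a) →+*
      ∀ a, integralClosure (R a) (AlgebraicClosure (FractionRing (R a))) :=
  Pi.ringHom fun a =>
    (algebraMap (R a)
      (integralClosure (R a) (AlgebraicClosure (FractionRing (R a))))).comp
      (Pi.evalRingHom R a)

open Polynomial in
lemma aiClosed_of_isAlgClosed (K : Type*) [Field K] [IsAlgClosed K] : AIClosed K := by
  intro p _ hd
  exact IsAlgClosed.exists_root p (fun h => by simp [h] at hd)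

open Polynomial in
lemma aiClosed_pi {A : Type*} {B : A → Type*} [∀ a, CommRing (B a)]
    (h : ∀ a, AIClosed (B a)) : AIClosed (∀ a, B a) := by
  intro p hm hd
  have key : ∀ a, ∃ x : B a, ((p.map (Pi.evalRingHom B a)).IsRoot x) := by
    intro a
    rcases subsingleton_or_nontrivial (B a) with hs | hn
    · exact ⟨0, Subsingleton.elim _ _⟩
    · exact h a _ (hm.map _) (by rw [hm.degree_map]; exact hd)
  choose x hx using key
  refine ⟨x, ?_⟩
  have : ∀ a, (p.map (Pi.evalRingHom B a)).eval ((Pi.evalRingHom B a) x)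
      = (Pi.evalRingHom B a) (p.eval x) := by
    intro a
    rw [eval_map, eval₂_hom]
  funext a
  exact ((this a).symm.trans (hx a))

open Polynomial in
lemma aiClosed_integralClosure_s6 {R B : Type*} [CommRing R] [CommRing B] [Algebra R B]
    (hB : AIClosed B) : AIClosed (integralClosure R B) := by
  intro p hm hd
  rcases subsingleton_or_nontrivial B with hs | hn
  · exact ⟨0, Subsingleton.elim _ _⟩
  obtain ⟨x, hx⟩ := hB (p.map (algebraMap (integralClosure R B) B)) (hm.map _)
    (by rw [hm.degree_map]; exact hd)
  have hxi : IsIntegral (integralClosure R B) x :=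
    ⟨p, hm, by rwa [← Polynomial.eval_map]⟩
  have hxR : IsIntegral R x := isIntegral_trans x hxi
  have hinj : Function.Injective (algebraMap (integralClosure R B) B) := Subtype.val_injective
  exact ⟨⟨x, hxR⟩, Polynomial.IsRoot.of_map (f := algebraMap (integralClosure R B) B) hx hinj⟩

open Polynomial in
lemma exists_mul_aeval_eq_algebraMap_aux {R C : Type*} [CommRing R] [CommRing C] [IsDomain C]
    [Algebra R C] {x : C} (hx0 : x ≠ 0) :
    ∀ n (p : Polynomial R), p.natDegree ≤ n → p.Monic → Polynomial.aeval x p = 0 →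
      ∃ (q : Polynomial R) (c : R), c ≠ 0 ∧ x * Polynomial.aeval x q = algebraMap R C c := by
  intro n
  induction n with
  | zero =>
      intro p hdeg hm hev
      have h1 : p = 1 := hm.natDegree_eq_zero.mp (Nat.le_zero.mp hdeg)
      rw [h1] at hev
      simp at hev
  | succ n ih =>
      intro p hdeg hm hev
      by_cases hc : p.coeff 0 = 0
      · have hp : X * divX p = p := by
          have h := X_mul_divX_add p
          rwa [hc, map_zero, add_zero] at h
        have hdiv : aeval x (divX p) = 0 := by
          have h0 : x * aeval x (divX p) = 0 := by
            rw [← hev]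
            conv_rhs => rw [← hp]
            rw [map_mul, aeval_X]
          rcases mul_eq_zero.mp h0 with h | h
          · exact absurd h hx0
          · exact h
        have hmonic : (divX p).Monic := Polynomial.monic_X.of_mul_monic_left (hp.symm ▸ hm)
        exact ih (divX p) (by rw [natDegree_divX_eq_natDegree_tsub_one]; omega) hmonic hdiv
      · refine ⟨-(divX p), p.coeff 0, hc, ?_⟩
        have h2 : x * aeval x (divX p) + algebraMap R C (p.coeff 0) = 0 := by
          rw [← hev]
          conv_rhs => rw [← X_mul_divX_add p]
          rw [map_add, map_mul, aeval_X, aeval_C]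
        rw [map_neg, mul_neg]
        linear_combination -h2

open Polynomial in
lemma exists_mul_aeval_eq_algebraMap {R C : Type*} [CommRing R] [CommRing C] [IsDomain C]
    [Algebra R C] {x : C} (hx : IsIntegral R x) (hx0 : x ≠ 0) :
    ∃ (q : Polynomial R) (c : R), c ≠ 0 ∧ x * Polynomial.aeval x q = algebraMap R C c := by
  obtain ⟨p, hm, hev⟩ := hx
  exact exists_mul_aeval_eq_algebraMap_aux hx0 p.natDegree p le_rfl hm (by rwa [aeval_def])

lemma isIntegralElem_map_comp {R S T : Type*} [CommRing R] [CommRing S] [CommRing T]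
    {f : R →+* S} (u : S →+* T) {x : S} (hx : f.IsIntegralElem x) :
    (u.comp f).IsIntegralElem (u x) := by
  obtain ⟨p, hm, hev⟩ := hx
  exact ⟨p, hm, by rw [← Polynomial.hom_eval₂, hev, map_zero]⟩

lemma isIntegralElem_of_comp {R S T : Type*} [CommRing R] [CommRing S] [CommRing T]
    (f : R →+* S) (v : S →+* T) {x : T} (h : (v.comp f).IsIntegralElem x) :
    v.IsIntegralElem x := by
  obtain ⟨p, hm, hev⟩ := h
  exact ⟨p.map f, hm.map f, by rwa [Polynomial.eval₂_map]⟩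

/-- If `R` is a subring of a product `P` of domains over which `P` is integral and tight,
then the integral closure `T` of `R` in `∏ R_a⁺` is an absolute integral closure of `R`,
and it is universal: every aic of `R` embeds into `T` over `R`. -/
theorem universal_aic_of_subring_of_product_of_domains
    (A : Type u) (R : A → Type v) [∀ a, CommRing (R a)] [∀ a, IsDomain (R a)]
    (R₀ : Type w) [CommRing R₀] (i : R₀ →+* ∀ a, R a)
    (hinj : Function.Injective i) (hint : i.IsIntegral) (htight : Tight i) :
    IsAIC (intClosureMap ((piPlusMap A R).comp i)) ∧
      ∀ (S : Type x) [CommRing S] (g : R₀ →+* S), IsAIC g →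
        ∃ h : S →+* intClosure ((piPlusMap A R).comp i),
          Function.Injective h ∧ h.comp g = intClosureMap ((piPlusMap A R).comp i) := by
  classical
  set π := piPlusMap A R with hπdef
  set g₀ := π.comp i with hg₀def
  -- injectivity of the component algebra maps
  have halg_inj : ∀ a, Function.Injective
      (algebraMap (R a) (AlgebraicClosure (FractionRing (R a)))) := by
    intro a
    rw [IsScalarTower.algebraMap_eq (R a) (FractionRing (R a))
      (AlgebraicClosure (FractionRing (R a))), RingHom.coe_comp]
    exact (RingHom.injective (algebraMap (FractionRing (R a))
      (AlgebraicClosure (FractionRing (R a))))).comp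
      (IsFractionRing.injective (R a) (FractionRing (R a)))
  have hBa_inj : ∀ a, Function.Injective
      (algebraMap (R a) (integralClosure (R a) (AlgebraicClosure (FractionRing (R a))))) := by
    intro a x y h
    exact halg_inj a (congrArg Subtype.val h)
  have hπinj : Function.Injective π := by
    intro x y h
    funext a
    exact hBa_inj a (congrFun h a)
  have hg₀inj : Function.Injective g₀ := hπinj.comp hinj
  have hTmap_inj : Function.Injective (intClosureMap g₀) := fun x y h =>
    hg₀inj (congrArg Subtype.val h)
  have hmemT : ∀ x, x ∈ intClosure g₀ ↔ g₀.IsIntegralElem x := fun _ => Iff.rfl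
  -- integrality
  have hTint : (intClosureMap g₀).IsIntegral := by
    intro y
    obtain ⟨p, hm, hev⟩ := (hmemT _).mp y.2
    refine ⟨p, hm, ?_⟩
    have h1 := Polynomial.hom_eval₂ p (intClosureMap g₀) (intClosure g₀).subtype y
    rw [show ((intClosure g₀).subtype.comp (intClosureMap g₀)) = g₀ from rfl] at h1
    exact Subtype.ext (h1.trans hev)
  -- ai closedness
  have hBB_ai : AIClosed (∀ a, integralClosure (R a) (AlgebraicClosure (FractionRing (R a)))) :=
    aiClosed_pi (fun a => aiClosed_integralClosure_s6
      (aiClosed_of_isAlgClosed (AlgebraicClosure (FractionRing (R a)))))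
  have hT_ai : AIClosed (intClosure g₀) := by
    letI : Algebra R₀ (∀ a, integralClosure (R a) (AlgebraicClosure (FractionRing (R a)))) :=
      g₀.toAlgebra
    exact aiClosed_integralClosure_s6 hBB_ai
  -- integrality of images of elements of P
  have hπ_int : ∀ v, g₀.IsIntegralElem (π v) := fun v => isIntegralElem_map_comp π (hint v)
  -- tightness
  have hTtight : Tight (intClosureMap g₀) := by
    intro s hs
    have hbne : s.1 ≠ 0 := fun h => hs (Subtype.ext h)
    obtain ⟨a, ha⟩ := Function.ne_iff.mp hbne
    have hxint : IsIntegral (R a) (s.1 a) := Algebra.IsIntegral.isIntegral _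
    obtain ⟨q, c, hc, hqc⟩ := exists_mul_aeval_eq_algebraMap hxint ha
    set x := s.1 a with hxdef
    set e : ∀ a', integralClosure (R a') (AlgebraicClosure (FractionRing (R a'))) :=
      Pi.single a 1 with hedef
    have he_int : g₀.IsIntegralElem e := by
      refine ⟨Polynomial.X * (Polynomial.X - Polynomial.C 1),
        Polynomial.monic_X.mul (Polynomial.monic_X_sub_C 1), ?_⟩
      rw [Polynomial.eval₂_mul, Polynomial.eval₂_X, Polynomial.eval₂_sub,
        Polynomial.eval₂_X, Polynomial.eval₂_C, map_one]
      funext a'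
      by_cases h : a' = a
      · subst h
        simp [hedef, Pi.single_eq_same]
      · simp [hedef, Pi.single_eq_of_ne h]
    set t : ∀ a', integralClosure (R a') (AlgebraicClosure (FractionRing (R a'))) :=
      Pi.single a (Polynomial.aeval x q) with htdef
    have ht_eq : t = ∑ j ∈ Finset.range (q.natDegree + 1),
        π (Pi.single a (q.coeff j)) * e * s.1 ^ j := by
      funext a'
      rw [Finset.sum_apply]
      by_cases h : a' = a
      · subst h
        rw [htdef, Pi.single_eq_same, Polynomial.aeval_eq_sum_range]
        refine Finset.sum_congr rfl fun j _ => ?_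
        rw [Algebra.smul_def]
        simp [hπdef, piPlusMap, hedef, Pi.single_eq_same, hxdef, Pi.ringHom]
      · simp [htdef, hedef, Pi.single_eq_of_ne h]
    have ht_mem : t ∈ intClosure g₀ := by
      rw [ht_eq]
      refine Subring.sum_mem _ fun j _ => ?_
      exact mul_mem (mul_mem ((hmemT _).mpr (hπ_int _)) ((hmemT _).mpr he_int))
        (pow_mem s.2 j)
    have hbt : s.1 * t = π (Pi.single a c) := by
      funext a'
      by_cases h : a' = a
      · subst h
        rw [Pi.mul_apply, htdef, Pi.single_eq_same, ← hxdef, hqc]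
        simp [hπdef, piPlusMap, Pi.single_eq_same, Pi.ringHom]
      · simp [htdef, hπdef, piPlusMap, Pi.single_eq_of_ne h, Pi.ringHom]
    have hsingle_ne : (Pi.single a c : ∀ a', R a') ≠ 0 := by
      intro h
      apply hc
      have h2 := congrFun h a
      rwa [Pi.single_eq_same] at h2
    obtain ⟨w, r, hr, hwr⟩ := htight _ hsingle_ne
    refine ⟨⟨t * π w, mul_mem ht_mem ((hmemT _).mpr (hπ_int w))⟩, r, hr, ?_⟩
    apply Subtype.val_injective
    show s.1 * (t * π w) = g₀ r
    rw [← mul_assoc, hbt, ← map_mul, hwr]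
    rfl
  refine ⟨⟨hTmap_inj, hTint, hTtight, hT_ai⟩, ?_⟩
  -- universality
  intro S _ g hgaic
  obtain ⟨hginj, hgint, hgtight, hgai⟩ := hgaic
  have key : ∀ a, ∃ φ : S →+* integralClosure (R a) (AlgebraicClosure (FractionRing (R a))),
      φ.comp g = (algebraMap (R a) (integralClosure (R a)
        (AlgebraicClosure (FractionRing (R a))))).comp ((Pi.evalRingHom R a).comp i) := by
    intro a
    set Ω := AlgebraicClosure (FractionRing (R a)) with hΩdef
    set ja : R₀ →+* R a := (Pi.evalRingHom R a).comp i with hjadef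
    haveI hpa : (RingHom.ker ja).IsPrime := RingHom.ker_isPrime ja
    letI : Algebra R₀ S := g.toAlgebra
    haveI : Algebra.IsIntegral R₀ S := ⟨hgint⟩
    obtain ⟨Q, hQge, hQprime, hQcomap⟩ :=
      Ideal.exists_ideal_over_prime_of_isIntegral (RingHom.ker ja) ⊥ (by
        rw [show Ideal.comap (algebraMap R₀ S) (⊥ : Ideal S) = RingHom.ker g from rfl,
          (RingHom.injective_iff_ker_eq_bot g).mp hginj]
        exact bot_le)
    haveI := hQprime
    set jq : R₀ ⧸ RingHom.ker ja →+* R a := RingHom.kerLift ja with hjqdef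
    have hjqinj : Function.Injective jq := RingHom.kerLift_injective ja
    set ρ : R₀ ⧸ RingHom.ker ja →+* S ⧸ Q := Ideal.quotientMap Q g (le_of_eq hQcomap.symm)
      with hρdef
    have hρinj : Function.Injective ρ := Ideal.quotientMap_injective' (le_of_eq hQcomap)
    letI : Algebra (R₀ ⧸ RingHom.ker ja) (S ⧸ Q) := ρ.toAlgebra
    letI : Algebra (R₀ ⧸ RingHom.ker ja) Ω := ((algebraMap (R a) Ω).comp jq).toAlgebra
    haveI : Module.IsTorsionFree (R₀ ⧸ RingHom.ker ja) (S ⧸ Q) :=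
      Module.isTorsionFree_iff_algebraMap_injective.mpr hρinj
    haveI : Module.IsTorsionFree (R₀ ⧸ RingHom.ker ja) Ω :=
      Module.isTorsionFree_iff_algebraMap_injective.mpr ((halg_inj a).comp hjqinj)
    haveI : Algebra.IsIntegral (R₀ ⧸ RingHom.ker ja) (S ⧸ Q) := by
      constructor
      intro z
      obtain ⟨s, rfl⟩ := Ideal.Quotient.mk_surjective z
      obtain ⟨p, hm, hev⟩ := hgint s
      refine ⟨p.map (Ideal.Quotient.mk (RingHom.ker ja)), hm.map _, ?_⟩
      rw [Polynomial.eval₂_map]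
      have h1 : (algebraMap (R₀ ⧸ RingHom.ker ja) (S ⧸ Q)).comp
          (Ideal.Quotient.mk (RingHom.ker ja)) = (Ideal.Quotient.mk Q).comp g := by
        ext r
        exact Ideal.quotientMap_mk (J := RingHom.ker ja) (H := le_of_eq hQcomap.symm)
      rw [h1]
      have h2 := Polynomial.hom_eval₂ p g (Ideal.Quotient.mk Q) s
      rw [← h2, hev, map_zero]
    haveI : Algebra.IsAlgebraic (R₀ ⧸ RingHom.ker ja) (S ⧸ Q) :=
      Algebra.IsIntegral.isAlgebraic
    let ψ : (S ⧸ Q) →ₐ[R₀ ⧸ RingHom.ker ja] Ω := IsAlgClosed.lift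
    set φ' : S →+* Ω := ψ.toRingHom.comp (Ideal.Quotient.mk Q) with hφ'def
    have hφ'g : φ'.comp g = (algebraMap (R a) Ω).comp ja := by
      ext r
      show ψ (Ideal.Quotient.mk Q (g r)) = algebraMap (R a) Ω (ja r)
      have h1 : Ideal.Quotient.mk Q (g r) = ρ (Ideal.Quotient.mk (RingHom.ker ja) r) :=
        (Ideal.quotientMap_mk (J := RingHom.ker ja) (H := le_of_eq hQcomap.symm)).symm
      rw [h1]
      have h2 := ψ.commutes (Ideal.Quotient.mk (RingHom.ker ja) r)
      rw [show (algebraMap (R₀ ⧸ RingHom.ker ja) (S ⧸ Q)) = ρ from rfl] at h2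
      rw [h2]
      show (algebraMap (R a) Ω) (jq (Ideal.Quotient.mk (RingHom.ker ja) r)) = _
      rw [hjqdef, RingHom.kerLift_mk]
    have hφ'int : ∀ s : S, φ' s ∈ integralClosure (R a) Ω := by
      intro s
      have h1 := isIntegralElem_map_comp φ' (hgint s)
      rw [hφ'g] at h1
      exact isIntegralElem_of_comp ja (algebraMap (R a) Ω) h1
    refine ⟨φ'.codRestrict (integralClosure (R a) Ω) hφ'int, ?_⟩
    ext r
    show φ' (g r) = algebraMap (R a) Ω (ja r)
    exact RingHom.congr_fun hφ'g r
  choose φ hφ using key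
  set Φ : S →+* ∀ a, integralClosure (R a) (AlgebraicClosure (FractionRing (R a))) :=
    Pi.ringHom φ with hΦdef
  have hΦg : Φ.comp g = g₀ := by
    apply RingHom.ext
    intro r
    funext a
    exact RingHom.congr_fun (hφ a) r
  have hΦT : ∀ s, Φ s ∈ intClosure g₀ := by
    intro s
    have h1 := isIntegralElem_map_comp Φ (hgint s)
    rw [hΦg] at h1
    exact (hmemT _).mpr h1
  set h : S →+* intClosure g₀ := Φ.codRestrict (intClosure g₀) hΦT with hhdef
  have hcomp : h.comp g = intClosureMap g₀ := by
    apply RingHom.ext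
    intro r
    exact Subtype.ext (RingHom.congr_fun hΦg r)
  have hhinj : Function.Injective h := by
    rw [injective_iff_map_eq_zero]
    intro s hs0
    by_contra hs
    obtain ⟨t, r, hr, hst⟩ := hgtight s hs
    have h1 : h s * h t = intClosureMap g₀ r := by
      rw [← map_mul, hst]
      exact RingHom.congr_fun hcomp r
    rw [hs0, zero_mul] at h1
    exact hr (hTmap_inj (h1.symm.trans (map_zero _).symm))
  exact ⟨h, hhinj, hcomp⟩
end

section
/- Let S be an absolute integral closure of R and let F be a submonoid of the monoid reg(R) of regular elements of R. Then every element of F is regular in S, and the localization F⁻¹S (with the natural map F⁻¹R → F⁻¹S) is an absolute integral closure of F⁻¹R. -/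
/-- The natural map `F⁻¹R →+* F⁻¹S` induced by `f : R →+* S` on localizations. -/
noncomputable def locMap {R S : Type*} [CommRing R] [CommRing S] (f : R →+* S)
    (F : Submonoid R) : Localization F →+* Localization (F.map f) :=
  IsLocalization.map (Localization (F.map f)) f (Submonoid.le_comap_map F)

/-- If `S` is an absolute integral closure of `R` and `F` is a submonoid of regular
elements of `R`, then the elements of `F` are regular in `S` and `F⁻¹S` is an absolute
integral closure of `F⁻¹R`. -/
theorem isAIC_localization (R S : Type*) [CommRing R] [CommRing S]
    (f : R →+* S) (hf : IsAIC f) (F : Submonoid R) (hF : F ≤ nonZeroDivisors R) :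
    (∀ x ∈ F, f x ∈ nonZeroDivisors S) ∧ IsAIC (locMap f F) := by
  obtain ⟨hinj, hint, htight, hai⟩ := hf
  -- Part 1: elements of `F` become regular in `S`.
  have hreg : ∀ x ∈ F, f x ∈ nonZeroDivisors S := by
    intro x hx
    rw [mem_nonZeroDivisors_iff_right]
    intro z hz
    by_contra hz0
    obtain ⟨t, r, hr, hrt⟩ := htight z hz0
    have h0 : f (x * r) = f 0 := by
      rw [map_mul, ← hrt, map_zero, ← mul_assoc, mul_comm (f x) z, hz, zero_mul]
    have hxr : x * r = 0 := hinj h0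
    exact hr (mem_nonZeroDivisors_iff_right.mp (hF hx) r (by rwa [mul_comm] at hxr))
  have hFS : F.map f ≤ nonZeroDivisors S := by
    rintro y ⟨x, hx, rfl⟩
    exact hreg x hx
  -- injectivity of the localized map
  have hinjloc : Function.Injective (locMap f F) := by
    unfold locMap
    exact IsLocalization.map_injective_of_injective F (Localization F)
      (Localization (F.map f)) hinj
  -- integrality of the localized map
  have hintloc : (locMap f F).IsIntegral := by
    unfold locMap
    exact isIntegral_localization' hint F
  -- tightness of the localized map
  have htightloc : Tight (locMap f F) := by
    intro z hz
    obtain ⟨⟨s, u⟩, hsu⟩ := IsLocalization.surj (M := F.map f) z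
    have hs : s ≠ 0 := by
      rintro rfl
      apply hz
      have hu := IsLocalization.map_units (Localization (F.map f)) u
      rw [map_zero] at hsu
      exact (hu.mul_left_eq_zero).mp hsu
    obtain ⟨t, r, hr, hrt⟩ := htight s hs
    refine ⟨algebraMap S (Localization (F.map f)) u * algebraMap S (Localization (F.map f)) t,
      algebraMap R (Localization F) r, ?_, ?_⟩
    · intro h0
      exact hr (IsLocalization.injective (Localization F) hF (by rwa [map_zero]))
    · rw [← mul_assoc, hsu, ← map_mul, hrt]
      exact (IsLocalization.map_eq (Submonoid.le_comap_map F) r).symm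
  -- absolute integral closedness of the localization
  have haic : AIClosed (Localization (F.map f)) := by
    intro p hp hdeg
    by_cases hLoc : Subsingleton (Localization (F.map f))
    · exact ⟨0, Subsingleton.elim _ _⟩
    rw [not_subsingleton_iff_nontrivial] at hLoc
    haveI := hLoc
    haveI : Nontrivial S := (algebraMap S (Localization (F.map f))).domain_nontrivial
    set Loc := Localization (F.map f)
    set φ := algebraMap S Loc with hφ
    have hφinj : Function.Injective φ := IsLocalization.injective Loc hFS
    obtain ⟨b0, hbM, hb'⟩ := IsLocalization.integerNormalization_spec (F.map f) p
    obtain ⟨b, hb⟩ : ∃ b : F.map f, ∀ i, φ ((IsLocalization.integerNormalization (F.map f) p).coeff i)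
        = (b : S) • p.coeff i :=
      ⟨⟨b0, hbM⟩, fun i => by rw [← Polynomial.coeff_map, hb', Polynomial.coeff_smul]⟩
    set q := IsLocalization.integerNormalization (F.map f) p with hq
    have hbu : IsUnit (φ (b : S)) := IsLocalization.map_units Loc b
    have hb0 : (φ (b : S)) ≠ 0 := hbu.ne_zero
    have hn : 0 < p.natDegree := Polynomial.natDegree_pos_iff_degree_pos.mpr hdeg
    have hqc : ∀ i, φ (q.coeff i) = φ (b : S) * p.coeff i := by
      intro i
      simpa [Algebra.smul_def] using hb i
    have hqn : φ (q.coeff p.natDegree) = φ (b : S) := by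
      rw [hqc, hp.coeff_natDegree, mul_one]
    have hq0 : q ≠ 0 := by
      intro h
      apply hb0
      rw [← hqn, h, Polynomial.coeff_zero, map_zero]
    have hdegle : q.natDegree ≤ p.natDegree := by
      rw [Polynomial.natDegree_le_iff_coeff_eq_zero]
      intro m hm
      apply hφinj
      rw [map_zero, hqc, Polynomial.coeff_eq_zero_of_natDegree_lt hm, mul_zero]
    have hqdeg : q.natDegree = p.natDegree := le_antisymm hdegle
      (Polynomial.le_natDegree_of_ne_zero (fun h => hb0 (by rw [← hqn, h, map_zero])))
    have hlc : φ q.leadingCoeff = φ (b : S) := by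
      rw [Polynomial.leadingCoeff, hqdeg, hqn]
    obtain ⟨y, hy⟩ := hai q.integralNormalization (Polynomial.monic_integralNormalization hq0)
      (by
        rw [Polynomial.degree_integralNormalization]
        exact Polynomial.natDegree_pos_iff_degree_pos.mp (hqdeg ▸ hn))
    obtain ⟨v, hv⟩ := hbu
    refine ⟨(↑v⁻¹ : Loc) * φ y, ?_⟩
    have hq1 : 1 ≤ q.natDegree := hqdeg ▸ hn
    have key := Polynomial.integralNormalization_eval₂_leadingCoeff_mul (p := q) hq1 φ
      ((↑v⁻¹ : Loc) * φ y)
    rw [hlc, ← hv, ← mul_assoc, Units.mul_inv, one_mul, Polynomial.eval₂_at_apply, hy.eq_zero,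
      map_zero] at key
    have hunit : IsUnit ((↑v : Loc) ^ (q.natDegree - 1)) := (v.isUnit).pow _
    have h2 : q.eval₂ φ ((↑v⁻¹ : Loc) * φ y) = 0 :=
      (hunit.mul_right_eq_zero).mp key.symm
    have hmap : q.map φ = Polynomial.C (φ (b : S)) * p := by
      ext i
      simp [Polynomial.coeff_map, hqc i]
    rw [← Polynomial.eval_map, hmap, Polynomial.eval_mul, Polynomial.eval_C] at h2
    rw [← hv] at h2
    exact (v.isUnit.mul_right_eq_zero).mp h2
  exact ⟨hreg, hinjloc, hintloc, htightloc, haic⟩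
end

section
/- Let S be an absolute integral closure of R such that every absolute integral closure of R is R-isomorphic to S (i.e. R⁺ exists and equals S), and let F be a submonoid of the regular elements of R. Then every absolute integral closure of F⁻¹R is F⁻¹R-isomorphic to F⁻¹S; that is, (F⁻¹R)⁺ = F⁻¹(R⁺). -/
/-- If `S = R⁺` is the unique absolute integral closure of `R` (every aic of `R` is
`R`-isomorphic to `S`), and `F` is a submonoid of regular elements of `R`, then every
absolute integral closure of `F⁻¹R` is `F⁻¹R`-isomorphic to `F⁻¹S`;
that is, `(F⁻¹R)⁺ = F⁻¹(R⁺)`. -/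
theorem aic_localization_unique (R : Type u) (S : Type u) [CommRing R] [CommRing S]
    (f : R →+* S) (hf : IsAIC f)
    (huniq : ∀ (S' : Type u) [CommRing S'] (f' : R →+* S'), IsAIC f' →
      ∃ e : S' ≃+* S, e.toRingHom.comp f' = f)
    (F : Submonoid R) (hF : F ≤ nonZeroDivisors R) :
    ∀ (T : Type u) [CommRing T] (g : Localization F →+* T), IsAIC g →
      ∃ e : T ≃+* Localization (F.map f), e.toRingHom.comp g = locMap f F := by
  intro T _ g hg
  obtain ⟨ginj, gint, gtight, gai⟩ := hg
  set φ : R →+* Localization F := algebraMap R (Localization F) with hφ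
  have hφinj : Function.Injective φ := IsLocalization.injective _ hF
  letI : Algebra (Localization F) T := g.toAlgebra
  letI : Algebra R T := (g.comp φ).toAlgebra
  haveI : IsScalarTower R (Localization F) T := IsScalarTower.of_algebraMap_eq fun _ => rfl
  set S' := integralClosure R T with hS'def
  set f' : R →+* ↥S' := algebraMap R ↥S' with hf'def
  have hvalf' : ∀ x : R, ((f' x : T)) = g (φ x) := fun x => rfl
  have hRTinj : Function.Injective (algebraMap R T) := ginj.comp hφinj
  have hvalinj : Function.Injective (algebraMap ↥S' T) := Subtype.val_injective
  -- f' is an absolute integral closure of R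
  haveI : Algebra.IsIntegral R ↥S' := ⟨fun x => integralClosure.isIntegral x⟩
  have hf'aic : IsAIC f' := by
    refine ⟨?_, ?_, ?_, ?_⟩
    · intro a b hab
      exact hRTinj (congrArg Subtype.val hab)
    · intro x
      exact integralClosure.isIntegral x
    · -- Tight
      intro s hs
      have hsT : (s : T) ≠ 0 := fun h => hs (Subtype.ext h)
      obtain ⟨t, q, hq0, hst⟩ := gtight (s : T) hsT
      obtain ⟨r, u, hru⟩ := IsLocalization.exists_mk'_eq F q
      have hr : r ≠ 0 := by
        rintro rfl
        exact hq0 (by rw [← hru, IsLocalization.mk'_zero])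
      have htint : IsIntegral (Localization F) t := gint t
      obtain ⟨v, hv⟩ := htint.exists_multiple_integral_of_isLocalization F
      have hrv : r * (v : R) ≠ 0 := fun h => hr ((hF v.2).2 r h)
      refine ⟨⟨(v : R) • t, hv⟩ * f' u, r * (v : R), hrv, ?_⟩
      apply hvalinj
      have key : q * φ u = φ r := by
        rw [← hru]; exact IsLocalization.mk'_spec (Localization F) r u
      have : (s : T) * ((v : R) • t * g (φ u)) = g (φ (r * v)) := by
        rw [Algebra.smul_def]
        have hv' : algebraMap R T (v : R) = g (φ (v : R)) := rfl
        calc (s : T) * (algebraMap R T (v : R) * t * g (φ u))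
            = ((s : T) * t) * g (φ u) * algebraMap R T (v : R) := by ring
          _ = g (q * φ u) * g (φ (v : R)) := by rw [hst, hv', map_mul]
          _ = g (φ r) * g (φ (v : R)) := by rw [key]
          _ = g (φ (r * v)) := by rw [← map_mul, ← map_mul]
      calc (algebraMap ↥S' T) (s * (⟨(v : R) • t, hv⟩ * f' u))
          = (s : T) * ((v : R) • t * g (φ u)) := rfl
        _ = g (φ (r * v)) := this
        _ = (algebraMap ↥S' T) (f' (r * (v : R))) := rfl
    · -- AIClosed
      intro p hmonic hdeg
      set ι : ↥S' →+* T := algebraMap ↥S' T with hι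
      have hιinj : Function.Injective ι := hvalinj
      obtain ⟨x, hx⟩ := gai (p.map ι) (hmonic.map ι)
        (by rwa [Polynomial.degree_map_eq_of_injective hιinj])
      have hx' : Polynomial.eval₂ ι x p = 0 := by
        simpa only [Polynomial.IsRoot.def, Polynomial.eval_map] using hx
      have hxint : IsIntegral ↥S' x := ⟨p, hmonic, hx'⟩
      have hxmem : x ∈ S' := isIntegral_trans x hxint
      refine ⟨⟨x, hxmem⟩, ?_⟩
      show Polynomial.eval (⟨x, hxmem⟩ : ↥S') p = 0
      apply hιinj
      rw [map_zero]
      calc ι (Polynomial.eval ⟨x, hxmem⟩ p)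
          = Polynomial.eval₂ ι (ι ⟨x, hxmem⟩) p := (Polynomial.eval₂_hom ι _).symm
        _ = Polynomial.eval₂ ι x p := rfl
        _ = 0 := hx'
  obtain ⟨e₁, he₁⟩ := huniq ↥S' f' hf'aic
  have he₁' : ∀ x : R, e₁ (f' x) = f x := fun x => RingHom.congr_fun he₁ x
  -- T is the localization of S' at F.map f'
  haveI hloc : IsLocalization (F.map f') T := by
    constructor
    constructor
    · rintro ⟨y, hy⟩
      obtain ⟨v, hvF, rfl⟩ := hy
      have : algebraMap ↥S' T (f' v) = g (φ v) := rfl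
      rw [this]
      exact (IsLocalization.map_units (Localization F) ⟨v, hvF⟩).map g
    · intro z
      have hz : IsIntegral (Localization F) z := gint z
      obtain ⟨v, hv⟩ := hz.exists_multiple_integral_of_isLocalization F
      refine ⟨(⟨(v : R) • z, hv⟩, ⟨f' v, ⟨v, v.2, rfl⟩⟩), ?_⟩
      show z * (algebraMap ↥S' T) (f' (v : R)) = (v : R) • z
      rw [Algebra.smul_def, mul_comm]
      rfl
    · intro x y hxy
      exact ⟨1, by rw [hvalinj hxy]⟩
  have hmapeq : (F.map f').map (e₁ : ↥S' →+* S) = F.map f := by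
    ext x
    simp only [Submonoid.mem_map]
    constructor
    · rintro ⟨y, ⟨v, hv, rfl⟩, rfl⟩
      exact ⟨v, hv, (he₁' v).symm⟩
    · rintro ⟨v, hv, rfl⟩
      exact ⟨f' v, ⟨v, hv, rfl⟩, he₁' v⟩
  have hmapeq' : (F.map f').map (e₁.toMonoidHom) = F.map f := hmapeq
  refine ⟨IsLocalization.ringEquivOfRingEquiv T (Localization (F.map f)) e₁ hmapeq', ?_⟩
  apply IsLocalization.ringHom_ext F
  ext x
  simp only [RingHom.comp_apply]
  have h1 : g (φ x) = algebraMap ↥S' T (f' x) := rfl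
  have h2 := IsLocalization.ringEquivOfRingEquiv_eq (S := T)
    (Q := Localization (F.map f)) hmapeq' (f' x)
  have h3 := RingHom.congr_fun
    (IsLocalization.map_comp (S := Localization F) (Q := Localization (F.map f))
      (g := f) (Submonoid.le_comap_map F)) x
  calc (IsLocalization.ringEquivOfRingEquiv T (Localization (F.map f)) e₁ hmapeq').toRingHom
        (g ((algebraMap R (Localization F)) x))
      = (algebraMap S (Localization (F.map f))) (e₁ (f' x)) := by rw [← h2]; rfl
    _ = (algebraMap S (Localization (F.map f))) (f x) := by rw [he₁']
    _ = (locMap f F) ((algebraMap R (Localization F)) x) := h3.symm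
end

section
/- Let R ⊆ S be an extension of commutative rings and F a submonoid of the regular elements of R. If S is tight over R, then the localization F⁻¹S is tight over F⁻¹R (with respect to the natural map F⁻¹R → F⁻¹S). -/
/-- Tightness is preserved by localization at a submonoid of regular elements. -/
theorem tight_localization (R S : Type*) [CommRing R] [CommRing S]
    (f : R →+* S) (hinj : Function.Injective f)
    (F : Submonoid R) (hF : F ≤ nonZeroDivisors R) (ht : Tight f) :
    Tight (locMap f F) := by
  intro s hs
  obtain ⟨⟨a, b⟩, rfl⟩ := IsLocalization.mk'_surjective (F.map f) s
  have ha : a ≠ 0 := by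
    rintro rfl
    exact hs (IsLocalization.mk'_zero _)
  obtain ⟨t, r, hr, hat⟩ := ht a ha
  refine ⟨algebraMap S (Localization (F.map f)) ((b : S) * t),
    algebraMap R (Localization F) r, ?_, ?_⟩
  · intro h
    exact hr (IsLocalization.injective (Localization F) hF (by simpa using h))
  · rw [map_mul, ← mul_assoc, IsLocalization.mk'_spec, ← map_mul, hat,
      locMap, IsLocalization.map_eq]
end

section
/- Let R ⊆ S be an extension of commutative rings and F a submonoid of the regular elements of R whose elements are also regular in S. If the extension F⁻¹R ⊆ F⁻¹S is tight, then R ⊆ S is tight. -/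
/-- If the elements of `F ⊆ reg(R)` are regular in `S` and `F⁻¹R ⊆ F⁻¹S` is tight,
then `R ⊆ S` is tight. -/
theorem tight_of_tight_localization (R S : Type*) [CommRing R] [CommRing S]
    (f : R →+* S) (hinj : Function.Injective f)
    (F : Submonoid R) (hF : F ≤ nonZeroDivisors R)
    (hreg : ∀ x ∈ F, f x ∈ nonZeroDivisors S)
    (ht : Tight (locMap f F)) : Tight f := by
  intro s hs
  set M := Submonoid.map f F with hMdef
  have hM : M ≤ nonZeroDivisors S := by
    rintro _ ⟨x, hx, rfl⟩; exact hreg x hx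
  have hinjS : Function.Injective (algebraMap S (Localization M)) :=
    IsLocalization.injective _ hM
  have hs' : algebraMap S (Localization M) s ≠ 0 := by
    intro h
    exact hs (hinjS (by simpa using h))
  obtain ⟨t', r', hr', heq⟩ := ht _ hs'
  obtain ⟨⟨u, w⟩, hu⟩ := IsLocalization.mk'_surjective M t'
  obtain ⟨⟨a, b⟩, ha⟩ := IsLocalization.mk'_surjective F r'
  obtain ⟨v, hv, hvw⟩ := w.2
  have hw : t' * algebraMap S (Localization M) (w : S) = algebraMap S (Localization M) u := by
    rw [← hu]; exact IsLocalization.mk'_spec _ u w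
  have hb : r' * algebraMap R (Localization F) (b : R) = algebraMap R (Localization F) a := by
    rw [← ha]; exact IsLocalization.mk'_spec _ a b
  have hcomm : ∀ x : R,
      locMap f F (algebraMap R (Localization F) x) = algebraMap S (Localization M) (f x) := by
    intro x
    simp [locMap, IsLocalization.map_eq]
    rfl
  -- a ≠ 0
  have haz : a ≠ 0 := by
    rintro rfl
    apply hr'
    have hbu := IsLocalization.map_units (Localization F) b
    have : r' * algebraMap R (Localization F) (b : R) = 0 := by simpa using hb
    exact (hbu.mul_left_eq_zero).mp (by rw [← this])
  -- clear denominators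
  have key : algebraMap S (Localization M) (s * u * f b) =
      algebraMap S (Localization M) (f a * (w : S)) := by
    have := congrArg (· * (algebraMap S (Localization M) (f b) *
      algebraMap S (Localization M) (w : S))) heq
    simp only [map_mul] at this ⊢
    calc algebraMap S (Localization M) s * algebraMap S (Localization M) u *
          algebraMap S (Localization M) (f b)
        = (algebraMap S (Localization M) s * t') *
          (algebraMap S (Localization M) (f b) * algebraMap S (Localization M) (w : S)) := by
          rw [← hw]; ring
      _ = locMap f F r' * (algebraMap S (Localization M) (f b) *
          algebraMap S (Localization M) (w : S)) := by rw [heq]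
      _ = (locMap f F r' * locMap f F (algebraMap R (Localization F) (b : R))) *
          algebraMap S (Localization M) (w : S) := by rw [hcomm]; ring
      _ = locMap f F (algebraMap R (Localization F) a) *
          algebraMap S (Localization M) (w : S) := by rw [← map_mul, hb]
      _ = algebraMap S (Localization M) (f a) * algebraMap S (Localization M) (w : S) := by
          rw [hcomm]
  have keyS : s * (u * f b) = f (a * v) := by
    have h := hinjS key
    rw [map_mul, hvw, ← mul_assoc]
    exact h
  refine ⟨u * f b, a * v, ?_, keyS⟩
  intro h0
  exact haz ((hF hv).2 a (by rw [← h0]))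
end

section
/- Let S be an absolute integral closure of R, let q be a prime ideal of S, and let p be the contraction of q to R. Then the induced extension R/p → S/q makes S/q an absolute integral closure of the domain R/p; in particular, S/q is R/p-isomorphic to (R/p)⁺. -/
/-- In an extension of an AIClosed ring by a domain, any root of a monic polynomial lies
in the image. -/
lemma AIClosed.root_mem_range_s14 {T K : Type*} [CommRing T] [CommRing K] [IsDomain K]
    (φ : T →+* K) (hT : AIClosed T) (x : K) :
    ∀ (n : ℕ) (P : Polynomial T), P.natDegree ≤ n → P.Monic → P.eval₂ φ x = 0 →
      x ∈ Set.range φ := by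
  haveI : Nontrivial T := φ.domain_nontrivial
  intro n
  induction n with
  | zero =>
    intro P hdeg hm hev
    have h1 : P = 1 := hm.natDegree_eq_zero.1 (Nat.le_zero.1 hdeg)
    rw [h1, Polynomial.eval₂_one] at hev
    exact absurd hev one_ne_zero
  | succ n ih =>
    intro P hdeg hm hev
    by_cases h0 : P.natDegree = 0
    · have h1 : P = 1 := hm.natDegree_eq_zero.1 h0
      rw [h1, Polynomial.eval₂_one] at hev
      exact absurd hev one_ne_zero
    · obtain ⟨t, ht⟩ := hT P hm (Polynomial.natDegree_pos_iff_degree_pos.1 (Nat.pos_of_ne_zero h0))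
      obtain ⟨P₂, hP₂⟩ := Polynomial.dvd_iff_isRoot.2 ht
      have hm₂ : P₂.Monic := (Polynomial.monic_X_sub_C t).of_mul_monic_left (hP₂ ▸ hm)
      have hev₂ : (x - φ t) * P₂.eval₂ φ x = 0 := by
        rw [← hev, hP₂, Polynomial.eval₂_mul, Polynomial.eval₂_sub, Polynomial.eval₂_X,
          Polynomial.eval₂_C]
      rcases mul_eq_zero.1 hev₂ with h | h
      · exact ⟨t, (sub_eq_zero.1 h).symm⟩
      · refine ih P₂ ?_ hm₂ h
        have hdm : P.natDegree = 1 + P₂.natDegree := by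
          rw [hP₂, Polynomial.Monic.natDegree_mul (Polynomial.monic_X_sub_C t) hm₂,
            Polynomial.natDegree_X_sub_C]
        omega

set_option maxHeartbeats 1000000 in
/-- If `S` is an absolute integral closure of `R`, `q` is a prime of `S` and `p = q ∩ R`,
then `S/q` is an absolute integral closure of the domain `R/p`; in particular `S/q` is
`R/p`-isomorphic to `(R/p)⁺`. -/
theorem quotient_isAIC (R S : Type*) [CommRing R] [CommRing S]
    (f : R →+* S) (hf : IsAIC f) (q : Ideal S) [q.IsPrime] [(q.comap f).IsPrime] :
    IsAIC (Ideal.quotientMap q f le_rfl) ∧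
      ∃ e : S ⧸ q ≃+* integralClosure (R ⧸ q.comap f)
          (AlgebraicClosure (FractionRing (R ⧸ q.comap f))),
        e.toRingHom.comp (Ideal.quotientMap q f le_rfl) =
          algebraMap (R ⧸ q.comap f)
            (integralClosure (R ⧸ q.comap f)
              (AlgebraicClosure (FractionRing (R ⧸ q.comap f)))) := by
  obtain ⟨-, hint, -, hai⟩ := hf
  set D := R ⧸ q.comap f with hD
  set T := S ⧸ q with hT
  set g : D →+* T := Ideal.quotientMap q f le_rfl with hg
  -- basic facts
  have hginj : Function.Injective g := Ideal.quotientMap_injective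
  have hgint : g.IsIntegral := hint.quotient
  -- AIClosed for the quotient
  have hai' : AIClosed T := by
    intro P hm hdeg
    have hlift : P ∈ Polynomial.lifts (Ideal.Quotient.mk q) := by
      rw [Polynomial.mem_lifts]
      exact Polynomial.map_surjective _ Ideal.Quotient.mk_surjective P
    obtain ⟨Q, hQmap, hQdeg, hQmonic⟩ :=
      Polynomial.lifts_and_degree_eq_and_monic hlift hm
    obtain ⟨x, hx⟩ := hai Q hQmonic (by rwa [hQdeg])
    refine ⟨Ideal.Quotient.mk q x, ?_⟩
    rw [← hQmap]
    exact hx.map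
  -- algebra structure
  letI : Algebra D T := g.toAlgebra
  haveI hDT : Algebra.IsIntegral D T := ⟨hgint⟩
  -- tightness
  have htight : Tight g := by
    intro s hs
    have hne : (Ideal.span {s}).comap (algebraMap D T) ≠ ⊥ :=
      Ideal.comap_ne_bot_of_integral_mem hs (Ideal.mem_span_singleton_self s) (hgint s)
    obtain ⟨r, hrmem, hrne⟩ := Submodule.exists_mem_ne_zero_of_ne_bot hne
    obtain ⟨t, ht⟩ := Ideal.mem_span_singleton'.1 (Ideal.mem_comap.1 hrmem)
    exact ⟨t, r, hrne, by rw [mul_comm]; exact ht⟩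
  refine ⟨⟨hginj, hgint, htight, hai'⟩, ?_⟩
  -- now the isomorphism with the absolute integral closure of D
  set F := FractionRing D with hF
  set K : Type _ := AlgebraicClosure F with hK
  haveI : Module.IsTorsionFree D T := Module.isTorsionFree_iff_algebraMap_injective.2 hginj
  have hDKinj : Function.Injective (algebraMap D K) := by
    rw [IsScalarTower.algebraMap_eq D F K]
    exact (algebraMap F K).injective.comp (IsFractionRing.injective D F)
  haveI : Module.IsTorsionFree D K := Module.isTorsionFree_iff_algebraMap_injective.2 hDKinj
  -- a D-algebra homomorphism T →ₐ[D] K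
  let φ : T →ₐ[D] K := IsAlgClosed.lift
  have hφinj : Function.Injective φ := by
    rw [injective_iff_map_eq_zero]
    intro a ha
    by_contra hane
    have hmem : a ∈ RingHom.ker φ.toRingHom := ha
    have hne := Ideal.comap_ne_bot_of_integral_mem hane hmem (hDT.isIntegral a)
    apply hne
    rw [eq_bot_iff]
    intro d hd
    have hz : algebraMap D K d = 0 := by
      rw [← φ.commutes d]
      exact RingHom.mem_ker.1 (Ideal.mem_comap.1 hd)
    exact hDKinj (by rw [hz, map_zero])
  letI : Algebra T K := φ.toRingHom.toAlgebra
  haveI : IsScalarTower D T K :=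
    IsScalarTower.of_algebraMap_eq fun d => (φ.commutes d).symm
  haveI : IsIntegralClosure T D K := by
    refine ⟨hφinj, ?_⟩
    intro x
    constructor
    · rintro ⟨p, hpm, hpev⟩
      have h : (p.map (algebraMap D T)).eval₂ (algebraMap T K) x = 0 := by
        rw [Polynomial.eval₂_map, ← IsScalarTower.algebraMap_eq D T K]
        exact hpev
      exact hai'.root_mem_range_s14 (algebraMap T K) x (p.map (algebraMap D T)).natDegree
        (p.map (algebraMap D T)) le_rfl (hpm.map _) h
    · rintro ⟨y, rfl⟩
      exact (hDT.isIntegral y).algebraMap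
  let e : T ≃ₐ[D] integralClosure D K := IsIntegralClosure.equiv D T K (integralClosure D K)
  exact ⟨e.toRingEquiv, RingHom.ext fun d => e.commutes d⟩
end

section
/- Let S be an absolute integral closure of a commutative ring R, and let p and q be prime ideals of S. Then the ideal p + q is either a prime ideal of S or the unit ideal S. -/
/-- In an absolute integral closure, the sum of two prime ideals is prime or the
unit ideal. -/
theorem sup_prime_of_isAIC (R S : Type*) [CommRing R] [CommRing S]
    (f : R →+* S) (hf : IsAIC f) (p q : Ideal S) (hp : p.IsPrime) (hq : q.IsPrime) :
    (p ⊔ q).IsPrime ∨ p ⊔ q = ⊤ := by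
  by_cases htop : p ⊔ q = ⊤
  · exact Or.inr htop
  left
  obtain ⟨-, -, -, hai⟩ := hf
  have hnt : Nontrivial S := by
    by_contra hns
    rw [not_nontrivial_iff_subsingleton] at hns
    refine htop ?_
    rw [Ideal.eq_top_iff_one, show (1 : S) = 0 from Subsingleton.elim _ _]
    exact zero_mem _
  refine ⟨htop, ?_⟩
  intro x y hxy
  rw [Submodule.mem_sup] at hxy
  obtain ⟨u, hu, v, hv, huv⟩ := hxy
  set P : Polynomial S :=
    Polynomial.X ^ (1 + 1) + (Polynomial.C (-(x + y)) * Polynomial.X + Polynomial.C u) with hPdef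
  have hlt : (Polynomial.C (-(x + y)) * Polynomial.X + Polynomial.C u).degree
      < (Polynomial.X ^ (1 + 1) : Polynomial S).degree := by
    rw [Polynomial.degree_X_pow]
    exact lt_of_le_of_lt Polynomial.degree_linear_le (by norm_num)
  have hmonic : P.Monic :=
    Polynomial.monic_X_pow_add (by rw [← Polynomial.degree_X_pow (R := S) (1 + 1)]; exact hlt)
  have hdeg : 0 < P.degree := by
    have h2 : P.degree = 2 := by
      rw [hPdef, Polynomial.degree_add_eq_left_of_degree_lt hlt]
      simp [Polynomial.degree_X_pow]
    rw [h2]; norm_num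
  obtain ⟨t, ht⟩ := hai P hmonic hdeg
  have ht' : t ^ 2 - (x + y) * t + u = 0 := by
    have h := ht
    simp only [hPdef, Polynomial.IsRoot, Polynomial.eval_add, Polynomial.eval_mul,
      Polynomial.eval_pow, Polynomial.eval_X, Polynomial.eval_C] at h
    linear_combination h
  have h1 : t * (x + y - t) = u := by linear_combination -ht'
  have h2 : (t - x) * (t - y) = v := by linear_combination ht' - huv
  have hpmem : t ∈ p ∨ x + y - t ∈ p := hp.mem_or_mem (h1 ▸ hu)
  have hqmem : t - x ∈ q ∨ t - y ∈ q := hq.mem_or_mem (h2 ▸ hv)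
  rcases hpmem with htp | hsp
  · rcases hqmem with hxq | hyq
    · left
      rw [Submodule.mem_sup]
      exact ⟨t, htp, -(t - x), q.neg_mem hxq, by ring⟩
    · right
      rw [Submodule.mem_sup]
      exact ⟨t, htp, -(t - y), q.neg_mem hyq, by ring⟩
  · rcases hqmem with hxq | hyq
    · right
      rw [Submodule.mem_sup]
      exact ⟨x + y - t, hsp, t - x, hxq, by ring⟩
    · left
      rw [Submodule.mem_sup]
      exact ⟨x + y - t, hsp, t - y, hyq, by ring⟩
end

section
/- Let R be a reduced commutative ring with only finitely many minimal prime ideals. Then the canonical ring homomorphism R → ∏_{p ∈ min(R)} R/p is injective, the product ∏_{p ∈ min(R)} R/p is integral over the image of R, and the resulting extension is tight. -/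
/-- The canonical map `R → ∏_{p ∈ min(R)} R/p`. -/
def minPrimesQuotMap (R : Type u) [CommRing R] :
    R →+* ∀ p : minimalPrimes R, R ⧸ (p : Ideal R) :=
  Pi.ringHom fun p => Ideal.Quotient.mk (p : Ideal R)

/-- For a reduced ring `R` with finitely many minimal primes, the canonical map
`R → ∏_{p ∈ min(R)} R/p` is injective, integral, and tight. -/
theorem minPrimesQuotMap_injective_integral_tight (R : Type u) [CommRing R] [IsReduced R]
    (hfin : (minimalPrimes R).Finite) :
    Function.Injective (minPrimesQuotMap R) ∧ (minPrimesQuotMap R).IsIntegral ∧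
      Tight (minPrimesQuotMap R) := by
  classical
  haveI : Fintype (minimalPrimes R) := hfin.fintype
  set f := minPrimesQuotMap R with hf
  have hprime : ∀ p : minimalPrimes R, (p : Ideal R).IsPrime := fun p => p.2.1.1
  have hinj : Function.Injective f := by
    rw [injective_iff_map_eq_zero]
    intro x hx
    have hmem : ∀ p : minimalPrimes R, x ∈ (p : Ideal R) := by
      intro p
      have := congrFun hx p
      exact Ideal.Quotient.eq_zero_iff_mem.mp this
    have : x ∈ sInf (minimalPrimes R) := by
      rw [Ideal.mem_sInf]
      intro I hI
      exact hmem ⟨I, hI⟩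
    have hrad : sInf (minimalPrimes R) = (⊥ : Ideal R).radical := Ideal.sInf_minimalPrimes
    rw [hrad] at this
    have hnil : IsNilpotent x := mem_nilradical.mp this
    exact IsReduced.eq_zero x hnil
  refine ⟨hinj, ?_, ?_⟩
  · -- integrality
    letI : Algebra R (∀ p : minimalPrimes R, R ⧸ (p : Ideal R)) := f.toAlgebra
    intro s
    show IsIntegral R s
    have hsingle : ∀ p : minimalPrimes R, IsIntegral R
        (Pi.single p 1 : ∀ p : minimalPrimes R, R ⧸ (p : Ideal R)) := by
      intro p
      refine ⟨Polynomial.X ^ 2 - Polynomial.X, ?_, ?_⟩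
      · refine Polynomial.monic_X_pow_sub (n := 2) ?_
        simpa using Polynomial.degree_X_le.trans_lt (by norm_num)
      · have hidem : (Pi.single p 1 : ∀ p : minimalPrimes R, R ⧸ (p : Ideal R)) ^ 2 =
            Pi.single p 1 := by
          funext q
          by_cases h : q = p
          · subst h; simp
          · simp [Pi.single_apply, h]
        simp [Polynomial.eval₂_sub, hidem]
    have : s ∈ integralClosure R (∀ p : minimalPrimes R, R ⧸ (p : Ideal R)) := by
      have hdecomp : s = ∑ p : minimalPrimes R,
          (Pi.single p 1) * f (Classical.choose (Ideal.Quotient.mk_surjective (s p))) := by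
        funext q
        rw [Finset.sum_apply]
        rw [Finset.sum_eq_single q]
        · have hq := Classical.choose_spec (Ideal.Quotient.mk_surjective (s q))
          simp [f, minPrimesQuotMap, hq]
          exact hq.symm
        · intro b _ hb
          simp [Pi.single_apply, Ne.symm hb]
        · simp
      rw [hdecomp]
      refine Subalgebra.sum_mem _ fun p _ => Subalgebra.mul_mem _ (hsingle p) ?_
      exact Subalgebra.algebraMap_mem _ _
    exact this
  · -- tightness
    intro s hs
    have : ∃ p : minimalPrimes R, s p ≠ 0 := by
      by_contra h
      push_neg at h
      exact hs (funext h)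
    obtain ⟨p, hp⟩ := this
    obtain ⟨r₀, hr₀⟩ := Ideal.Quotient.mk_surjective (s p)
    have hr₀p : r₀ ∉ (p : Ideal R) := by
      intro h
      exact hp (by rw [← hr₀, Ideal.Quotient.eq_zero_iff_mem]; exact h)
    -- find a in all other minimal primes, not in p
    have hnle : ¬ ((Finset.univ.erase p).inf (fun q : minimalPrimes R => (q : Ideal R))
        ≤ (p : Ideal R)) := by
      intro hle
      rw [(hprime p).inf_le'] at hle
      obtain ⟨q, hq, hqle⟩ := hle
      have hqp : q ≠ p := (Finset.mem_erase.mp hq).1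
      have := p.2.2 ⟨(hprime q), bot_le⟩ hqle
      exact hqp (Subtype.ext (le_antisymm hqle this))
    obtain ⟨a, ha, hap⟩ := SetLike.not_le_iff_exists.mp hnle
    refine ⟨Pi.single p (Ideal.Quotient.mk (p : Ideal R) a), r₀ * a, ?_, ?_⟩
    · intro h
      have : r₀ * a ∈ (p : Ideal R) := by rw [h]; exact Ideal.zero_mem _
      rcases (hprime p).mem_or_mem this with h1 | h1
      · exact hr₀p h1
      · exact hap h1
    · funext q
      by_cases hq : q = p
      · subst hq
        simp [f, minPrimesQuotMap, ← hr₀, ← map_mul]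
        rfl
      · have haq : a ∈ (q : Ideal R) := by
          have : (Finset.univ.erase p).inf (fun q : minimalPrimes R => (q : Ideal R))
              ≤ (q : Ideal R) := Finset.inf_le (Finset.mem_erase.mpr ⟨hq, Finset.mem_univ q⟩)
          exact this ha
        have hmem : r₀ * a ∈ (q : Ideal R) := Ideal.mul_mem_left _ _ haq
        rw [Pi.mul_apply, Pi.single_eq_of_ne hq, mul_zero]
        exact (Ideal.Quotient.eq_zero_iff_mem.mpr hmem).symm
end
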